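/- arXiv:2104.03554 — 2 statements merged into one kernel-verified Lean document; each statement's English description precedes it below -/
import Mathlib

section
/- Let n ≥ 1 be an integer, N an integer with 0 ≤ N ≤ n−1, and a₁,…,a_N ≥ 0 real numbers. Let U ⊂ ℂⁿ be the open unit polydisk, D = ⋃_{k=1}^N {z_k = 0}, and ψ(z) = log(|z_n|² ∏_{k=1}^N |z_k|^{2a_k}). For every admissible datum (g, g̃) one has lim_{t→−∞} ∫_{U ∩ {z : t < ψ(z) < t+1}} g̃(z) e^{−ψ(z)} dλ_{2n}(z) = π ∫_{ℂ^{n−1}} g(z′) ∏_{k=1}^N |z′_k|^{−2a_k} dλ_{2n−2}(z′). -/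
open MeasureTheory Filter Real Set

namespace OhsawaAux

/-- open annulus -/
def Ann (r₁ r₂ : ℝ) : Set ℂ := {w | r₁ < ‖w‖ ∧ ‖w‖ < r₂}

lemma measurableSet_Ann (r₁ r₂ : ℝ) : MeasurableSet (Ann r₁ r₂) := by
  have : Ann r₁ r₂ = (norm : ℂ → ℝ) ⁻¹' (Set.Ioo r₁ r₂) := rfl
  rw [this]
  exact (measurableSet_Ioo).preimage continuous_norm.measurable

lemma Ann_subset_closed (r₁ r₂ : ℝ) :
    Ann r₁ r₂ ⊆ {w : ℂ | r₁ ≤ ‖w‖ ∧ ‖w‖ ≤ r₂} :=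
  fun w hw => ⟨hw.1.le, hw.2.le⟩

lemma isCompact_closedAnn (r₁ r₂ : ℝ) :
    IsCompact {w : ℂ | r₁ ≤ ‖w‖ ∧ ‖w‖ ≤ r₂} := by
  have hsub : {w : ℂ | r₁ ≤ ‖w‖ ∧ ‖w‖ ≤ r₂} ⊆ Metric.closedBall 0 r₂ := by
    intro w hw
    simpa [Complex.dist_eq, Complex.norm_def] using hw.2
  have hclosed : IsClosed {w : ℂ | r₁ ≤ ‖w‖ ∧ ‖w‖ ≤ r₂} := by
    have : {w : ℂ | r₁ ≤ ‖w‖ ∧ ‖w‖ ≤ r₂}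
        = (norm : ℂ → ℝ) ⁻¹' (Set.Icc r₁ r₂) := rfl
    rw [this]
    exact isClosed_Icc.preimage continuous_norm
  exact (isCompact_closedBall 0 r₂).of_isClosed_subset hclosed hsub

lemma integrableOn_ann {r₁ r₂ c : ℝ} (h1 : 0 < r₁) (hc : 0 < c)
    {h : ℂ → ℝ} (hh : Continuous h) :
    IntegrableOn (fun w => h w * (‖w‖ ^ 2 * c)⁻¹) (Ann r₁ r₂) := by
  have hC : IntegrableOn (fun w => h w * (‖w‖ ^ 2 * c)⁻¹)
      {w : ℂ | r₁ ≤ ‖w‖ ∧ ‖w‖ ≤ r₂} := by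
    apply ContinuousOn.integrableOn_compact (isCompact_closedAnn r₁ r₂)
    apply hh.continuousOn.mul
    apply ContinuousOn.inv₀
    · exact ((continuous_norm.pow 2).mul continuous_const).continuousOn
    · intro w hw
      have : (0:ℝ) < ‖w‖ := lt_of_lt_of_le h1 hw.1
      positivity
  exact hC.mono_set (Ann_subset_closed r₁ r₂)

lemma ann_integral {r₁ r₂ : ℝ} (h1 : 0 < r₁) (h2 : r₁ ≤ r₂) :
    ∫ w in Ann r₁ r₂, (‖w‖ ^ 2)⁻¹ = (2 * π) * (Real.log r₂ - Real.log r₁) := by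
  have key := Complex.integral_comp_polarCoord_symm
    (fun w => Set.indicator (Ann r₁ r₂) (fun w => (‖w‖ ^ 2)⁻¹) w)
  rw [← integral_indicator (measurableSet_Ann r₁ r₂), ← key]
  have heq : ∀ p ∈ Complex.polarCoord.target,
      p.1 • Set.indicator (Ann r₁ r₂) (fun w => (‖w‖ ^ 2)⁻¹)
        (Complex.polarCoord.symm p)
      = Set.indicator (Set.Ioo r₁ r₂ ×ˢ (Set.univ : Set ℝ)) (fun p : ℝ × ℝ => (p.1)⁻¹) p := by
    intro p hp
    have hp1 : 0 < p.1 := hp.1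
    have habs : ‖Complex.polarCoord.symm p‖ = p.1 := by
      rw [Complex.norm_polarCoord_symm, abs_of_pos hp1]
    by_cases hmem : r₁ < p.1 ∧ p.1 < r₂
    · have h1' : Complex.polarCoord.symm p ∈ Ann r₁ r₂ := by
        simp only [Ann, Set.mem_setOf_eq, habs]
        exact hmem
      have h2' : p ∈ Set.Ioo r₁ r₂ ×ˢ (Set.univ : Set ℝ) := by
        simp [hmem.1, hmem.2]
      rw [Set.indicator_of_mem h1', Set.indicator_of_mem h2', habs, smul_eq_mul]
      rw [sq]
      field_simp
    · have h1' : Complex.polarCoord.symm p ∉ Ann r₁ r₂ := by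
        simp only [Ann, Set.mem_setOf_eq, habs]; exact hmem
      have h2' : p ∉ Set.Ioo r₁ r₂ ×ˢ (Set.univ : Set ℝ) := by
        simp only [Set.mem_prod, Set.mem_Ioo, Set.mem_univ, and_true]
        exact hmem
      rw [Set.indicator_of_notMem h1', Set.indicator_of_notMem h2', smul_zero]
  rw [show Complex.polarCoord.target = polarCoord.target from rfl] at heq
  rw [polarCoord_target] at heq ⊢
  rw [setIntegral_congr_fun (measurableSet_Ioi.prod measurableSet_Ioo) heq]
  rw [integral_indicator (measurableSet_Ioo.prod MeasurableSet.univ)]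
  have hset : (Set.Ioi (0:ℝ) ×ˢ Set.Ioo (-π) π) ∩ (Set.Ioo r₁ r₂ ×ˢ (Set.univ : Set ℝ))
      = Set.Ioo r₁ r₂ ×ˢ Set.Ioo (-π) π := by
    ext p
    simp only [Set.mem_inter_iff, Set.mem_prod, Set.mem_Ioi, Set.mem_Ioo, Set.mem_univ, and_true]
    constructor
    · rintro ⟨⟨_, hθ⟩, hr⟩; exact ⟨hr, hθ⟩
    · rintro ⟨hr, hθ⟩; exact ⟨⟨lt_of_lt_of_le h1 hr.1.le, hθ⟩, hr⟩
  rw [Measure.restrict_restrict (measurableSet_Ioo.prod MeasurableSet.univ)]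
  rw [Set.inter_comm, hset]
  rw [MeasureTheory.Measure.volume_eq_prod]
  calc ∫ p in Set.Ioo r₁ r₂ ×ˢ Set.Ioo (-π) π, (p.1)⁻¹ ∂(volume.prod volume)
      = ∫ p in Set.Ioo r₁ r₂ ×ˢ Set.Ioo (-π) π, (p.1)⁻¹ * 1 ∂(volume.prod volume) := by
        simp only [mul_one]
    _ = (∫ x in Set.Ioo r₁ r₂, x⁻¹) * ∫ _y in Set.Ioo (-π) π, (1:ℝ) :=
        MeasureTheory.setIntegral_prod_mul (fun x : ℝ => x⁻¹) (fun _ : ℝ => (1:ℝ)) _ _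
    _ = 2 * π * (Real.log r₂ - Real.log r₁) := by
        have hIoo : ∫ x in Set.Ioo r₁ r₂, x⁻¹ = Real.log r₂ - Real.log r₁ := by
          rw [← MeasureTheory.integral_Ioc_eq_integral_Ioo,
            ← intervalIntegral.integral_of_le h2, integral_inv_of_pos h1 (lt_of_lt_of_le h1 h2),
            Real.log_div (ne_of_gt (lt_of_lt_of_le h1 h2)) (ne_of_gt h1)]
        have hIoo2 : ∫ _x in Set.Ioo (-π) π, (1:ℝ) = 2 * π := by
          simp only [MeasureTheory.setIntegral_const, smul_eq_mul, mul_one]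
          rw [measureReal_def, Real.volume_Ioo, ENNReal.toReal_ofReal (by linarith [Real.pi_pos] : (0:ℝ) ≤ π - (-π))]
          ring
        rw [hIoo, hIoo2]
        ring

end OhsawaAux

namespace OhsawaAux
open MeasureTheory Filter Real Set

/-- the inner slice set -/
def A (c t : ℝ) : Set ℂ :=
  {w : ℂ | ‖w‖ < 1 ∧ t < Real.log (‖w‖ ^ 2 * c) ∧
    Real.log (‖w‖ ^ 2 * c) < t + 1}

lemma measurableSet_A (c t : ℝ) : MeasurableSet (A c t) := by
  have hL : Measurable fun w : ℂ => Real.log (‖w‖ ^ 2 * c) :=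
    Real.measurable_log.comp ((continuous_norm.pow 2).mul continuous_const).measurable
  exact (continuous_norm.measurable measurableSet_Iio)
    |>.inter ((measurableSet_lt measurable_const hL).inter (measurableSet_lt hL measurable_const))

lemma setB_eq {c t : ℝ} (hc : 0 < c) (ht : t ≤ -1) :
    {w : ℂ | t < Real.log (‖w‖ ^ 2 * c) ∧ Real.log (‖w‖ ^ 2 * c) < t + 1}
      = Ann (rexp ((t - Real.log c) / 2)) (rexp ((t + 1 - Real.log c) / 2)) := by
  ext w
  simp only [Set.mem_setOf_eq, Ann]
  constructor
  · rintro ⟨h1, h2⟩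
    have hw0 : ‖w‖ ≠ 0 := by
      intro h0
      rw [h0] at h2
      simp only [ne_eq, OfNat.ofNat_ne_zero, not_false_eq_true, zero_pow, zero_mul,
        Real.log_zero] at h2
      linarith
    have hwpos : 0 < ‖w‖ := (norm_nonneg w).lt_of_ne (Ne.symm hw0)
    have hlog : Real.log (‖w‖ ^ 2 * c)
        = 2 * Real.log (‖w‖) + Real.log c := by
      rw [Real.log_mul (pow_ne_zero 2 hw0) hc.ne', Real.log_pow]
      push_cast; ring
    rw [hlog] at h1 h2
    constructor
    · calc rexp ((t - Real.log c) / 2) < rexp (Real.log (‖w‖)) :=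
            Real.exp_lt_exp.mpr (by linarith)
        _ = ‖w‖ := Real.exp_log hwpos
    · calc ‖w‖ = rexp (Real.log (‖w‖)) := (Real.exp_log hwpos).symm
        _ < rexp ((t + 1 - Real.log c) / 2) := Real.exp_lt_exp.mpr (by linarith)
  · rintro ⟨ha, hb⟩
    have hwpos : 0 < ‖w‖ := lt_trans (Real.exp_pos _) ha
    have hlog : Real.log (‖w‖ ^ 2 * c)
        = 2 * Real.log (‖w‖) + Real.log c := by
      rw [Real.log_mul (pow_ne_zero 2 hwpos.ne') hc.ne', Real.log_pow]
      push_cast; ring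
    have ha' : (t - Real.log c) / 2 < Real.log (‖w‖) := by
      have := Real.log_lt_log (Real.exp_pos _) ha
      rwa [Real.log_exp] at this
    have hb' : Real.log (‖w‖) < (t + 1 - Real.log c) / 2 := by
      have := Real.log_lt_log hwpos hb
      rwa [Real.log_exp] at this
    rw [hlog]
    constructor <;> linarith

lemma A_eq_inter {c t : ℝ} (hc : 0 < c) (ht : t ≤ -1) :
    A c t = {w : ℂ | ‖w‖ < 1}
      ∩ Ann (rexp ((t - Real.log c) / 2)) (rexp ((t + 1 - Real.log c) / 2)) := by
  rw [← setB_eq hc ht]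
  rfl

lemma A_subset {c t : ℝ} (hc : 0 < c) (ht : t ≤ -1) :
    A c t ⊆ Ann (rexp ((t - Real.log c) / 2)) (rexp ((t + 1 - Real.log c) / 2)) := by
  rw [A_eq_inter hc ht]; exact Set.inter_subset_right

lemma A_eq {c t : ℝ} (hc : 0 < c) (ht : t ≤ -1)
    (hr : rexp ((t + 1 - Real.log c) / 2) ≤ 1) :
    A c t = Ann (rexp ((t - Real.log c) / 2)) (rexp ((t + 1 - Real.log c) / 2)) := by
  rw [A_eq_inter hc ht]
  apply Set.inter_eq_right.mpr
  intro w hw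
  exact lt_of_lt_of_le hw.2 hr

lemma exp_eq_inv_on_A {c t : ℝ} (hc : 0 < c) (ht : t ≤ -1) {w : ℂ} (hw : w ∈ A c t) :
    rexp (-Real.log (‖w‖ ^ 2 * c)) = (‖w‖ ^ 2 * c)⁻¹ := by
  have hwpos : 0 < ‖w‖ := lt_trans (Real.exp_pos _) (A_subset hc ht hw).1
  have hx : 0 < ‖w‖ ^ 2 * c := by positivity
  rw [Real.exp_neg, Real.exp_log hx]

lemma ann_integral_c {r₁ r₂ c : ℝ} (h1 : 0 < r₁) (h2 : r₁ ≤ r₂) (hc : 0 < c) :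
    ∫ w in Ann r₁ r₂, (‖w‖ ^ 2 * c)⁻¹
      = (2 * π) * (Real.log r₂ - Real.log r₁) / c := by
  simp_rw [mul_inv]
  rw [MeasureTheory.integral_mul_const, ann_integral h1 h2]
  field_simp

end OhsawaAux

namespace OhsawaAux
open MeasureTheory Filter Real Set

lemma log_r_diff (c t : ℝ) :
    Real.log (rexp ((t + 1 - Real.log c) / 2)) - Real.log (rexp ((t - Real.log c) / 2))
      = 1 / 2 := by
  rw [Real.log_exp, Real.log_exp]; ring

lemma bound1D {c t M : ℝ} (hc : 0 < c) (ht : t ≤ -1) {h : ℂ → ℝ} (hh : Continuous h)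
    (hM : ∀ w, |h w| ≤ M) :
    |∫ w in A c t, h w * rexp (-Real.log (‖w‖ ^ 2 * c))| ≤ π * M / c := by
  have hM0 : 0 ≤ M := le_trans (abs_nonneg _) (hM 0)
  set r₁ := rexp ((t - Real.log c) / 2) with hr₁def
  set r₂ := rexp ((t + 1 - Real.log c) / 2) with hr₂def
  have hr₁ : 0 < r₁ := Real.exp_pos _
  have hr₁₂ : r₁ ≤ r₂ := Real.exp_le_exp.mpr (by linarith)
  have hsub : A c t ⊆ Ann r₁ r₂ := A_subset hc ht
  have hmeasA : MeasurableSet (A c t) := measurableSet_A c t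
  have hintAnn : IntegrableOn (fun w => h w * (‖w‖ ^ 2 * c)⁻¹) (Ann r₁ r₂) :=
    integrableOn_ann hr₁ hc hh
  have hintAnn' : IntegrableOn (fun w => M * (‖w‖ ^ 2 * c)⁻¹) (Ann r₁ r₂) :=
    integrableOn_ann hr₁ hc continuous_const
  have hcongr : ∫ w in A c t, h w * rexp (-Real.log (‖w‖ ^ 2 * c))
      = ∫ w in A c t, h w * (‖w‖ ^ 2 * c)⁻¹ :=
    setIntegral_congr_fun hmeasA (fun w hw => by rw [exp_eq_inv_on_A hc ht hw])
  rw [hcongr]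
  calc |∫ w in A c t, h w * (‖w‖ ^ 2 * c)⁻¹|
      ≤ ∫ w in A c t, |h w * (‖w‖ ^ 2 * c)⁻¹| :=
        norm_integral_le_integral_norm (f := fun w => h w * (‖w‖ ^ 2 * c)⁻¹)
          (μ := volume.restrict (A c t))
    _ ≤ ∫ w in A c t, M * (‖w‖ ^ 2 * c)⁻¹ := by
        apply setIntegral_mono_on ((hintAnn.mono_set hsub).abs) (hintAnn'.mono_set hsub) hmeasA
        intro w hw
        have hx : (0:ℝ) ≤ (‖w‖ ^ 2 * c)⁻¹ := by positivity
        rw [abs_mul, abs_of_nonneg hx]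
        exact mul_le_mul_of_nonneg_right (hM w) hx
    _ ≤ ∫ w in Ann r₁ r₂, M * (‖w‖ ^ 2 * c)⁻¹ := by
        apply setIntegral_mono_set hintAnn'
        · filter_upwards with w
          have : (0:ℝ) ≤ (‖w‖ ^ 2 * c)⁻¹ := by positivity
          positivity
        · exact HasSubset.Subset.eventuallyLE hsub
    _ = M * ((2 * π) * (Real.log r₂ - Real.log r₁) / c) := by
        rw [MeasureTheory.integral_const_mul, ann_integral_c hr₁ hr₁₂ hc]
    _ = π * M / c := by
        rw [hr₁def, hr₂def, log_r_diff]
        ring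

lemma tendsto1D {c : ℝ} (hc : 0 < c) {h : ℂ → ℝ} (hh : Continuous h) :
    Tendsto (fun t => ∫ w in A c t, h w * rexp (-Real.log (‖w‖ ^ 2 * c))) atBot
      (nhds (π * h 0 / c)) := by
  rw [Metric.tendsto_nhds]
  intro ε hε
  have hπ : (0:ℝ) < π := Real.pi_pos
  set ε' : ℝ := ε * c / (2 * π) with hε'def
  have hε' : 0 < ε' := by positivity
  obtain ⟨δ, hδ, hδ'⟩ := Metric.continuous_iff.mp hh 0 ε' hε'
  filter_upwards [eventually_lt_atBot
    (min (-1) (Real.log c - 1 + 2 * Real.log (min δ 1)))] with t ht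
  have ht1 : t ≤ -1 := le_of_lt (lt_of_lt_of_le ht (min_le_left _ _))
  have ht2 : t < Real.log c - 1 + 2 * Real.log (min δ 1) :=
    lt_of_lt_of_le ht (min_le_right _ _)
  set r₁ := rexp ((t - Real.log c) / 2) with hr₁def
  set r₂ := rexp ((t + 1 - Real.log c) / 2) with hr₂def
  have hr₁ : 0 < r₁ := Real.exp_pos _
  have hr₁₂ : r₁ ≤ r₂ := Real.exp_le_exp.mpr (by linarith)
  have hmin : 0 < min δ 1 := lt_min hδ one_pos
  have hr₂δ : r₂ < min δ 1 := by
    calc r₂ < rexp (Real.log (min δ 1)) := Real.exp_lt_exp.mpr (by linarith)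
      _ = min δ 1 := Real.exp_log hmin
  have hr₂1 : r₂ ≤ 1 := le_trans hr₂δ.le (min_le_right _ _)
  have hAeq : A c t = Ann r₁ r₂ := A_eq hc ht1 hr₂1
  have hintAnn : IntegrableOn (fun w => h w * (‖w‖ ^ 2 * c)⁻¹) (Ann r₁ r₂) :=
    integrableOn_ann hr₁ hc hh
  have hintC : IntegrableOn (fun w => h 0 * (‖w‖ ^ 2 * c)⁻¹) (Ann r₁ r₂) :=
    integrableOn_ann hr₁ hc continuous_const
  have hintD : IntegrableOn (fun w => (h w - h 0) * (‖w‖ ^ 2 * c)⁻¹) (Ann r₁ r₂) :=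
    integrableOn_ann hr₁ hc (hh.sub continuous_const)
  have hintE : IntegrableOn (fun w => ε' * (‖w‖ ^ 2 * c)⁻¹) (Ann r₁ r₂) :=
    integrableOn_ann hr₁ hc continuous_const
  have hIval : ∫ w in Ann r₁ r₂, (‖w‖ ^ 2 * c)⁻¹ = π / c := by
    rw [ann_integral_c hr₁ hr₁₂ hc, hr₁def, hr₂def, log_r_diff]
    ring
  have hcongr : ∫ w in A c t, h w * rexp (-Real.log (‖w‖ ^ 2 * c))
      = ∫ w in Ann r₁ r₂, h w * (‖w‖ ^ 2 * c)⁻¹ := by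
    rw [setIntegral_congr_fun (measurableSet_A c t)
      (fun w hw => by rw [exp_eq_inv_on_A hc ht1 hw]), hAeq]
  rw [Real.dist_eq, hcongr]
  have hsplit : ∫ w in Ann r₁ r₂, h w * (‖w‖ ^ 2 * c)⁻¹
      = (∫ w in Ann r₁ r₂, (h w - h 0) * (‖w‖ ^ 2 * c)⁻¹) + π * h 0 / c := by
    have : ∫ w in Ann r₁ r₂, (h w - h 0) * (‖w‖ ^ 2 * c)⁻¹
        = (∫ w in Ann r₁ r₂, h w * (‖w‖ ^ 2 * c)⁻¹)
          - ∫ w in Ann r₁ r₂, h 0 * (‖w‖ ^ 2 * c)⁻¹ := by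
      rw [← MeasureTheory.integral_sub hintAnn hintC]
      congr 1
      funext w
      ring
    rw [this, MeasureTheory.integral_const_mul, hIval]
    ring
  rw [hsplit]
  have hkey : |∫ w in Ann r₁ r₂, (h w - h 0) * (‖w‖ ^ 2 * c)⁻¹| ≤ ε' * (π / c) := by
    calc |∫ w in Ann r₁ r₂, (h w - h 0) * (‖w‖ ^ 2 * c)⁻¹|
        ≤ ∫ w in Ann r₁ r₂, |(h w - h 0) * (‖w‖ ^ 2 * c)⁻¹| :=
          norm_integral_le_integral_norm
            (f := fun w => (h w - h 0) * (‖w‖ ^ 2 * c)⁻¹)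
            (μ := volume.restrict (Ann r₁ r₂))
      _ ≤ ∫ w in Ann r₁ r₂, ε' * (‖w‖ ^ 2 * c)⁻¹ := by
          apply setIntegral_mono_on hintD.abs hintE (measurableSet_Ann r₁ r₂)
          intro w hw
          have hx : (0:ℝ) ≤ (‖w‖ ^ 2 * c)⁻¹ := by positivity
          rw [abs_mul, abs_of_nonneg hx]
          apply mul_le_mul_of_nonneg_right _ hx
          have hwδ : dist w 0 < δ := by
            rw [Complex.dist_eq, sub_zero]
            exact lt_of_lt_of_le (lt_of_lt_of_le hw.2 hr₂δ.le) (min_le_left _ _)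
          have := hδ' w hwδ
          rw [Real.dist_eq] at this
          exact this.le
      _ = ε' * (π / c) := by rw [MeasureTheory.integral_const_mul, hIval]
  calc |(∫ w in Ann r₁ r₂, (h w - h 0) * (‖w‖ ^ 2 * c)⁻¹) + π * h 0 / c - π * h 0 / c|
      = |∫ w in Ann r₁ r₂, (h w - h 0) * (‖w‖ ^ 2 * c)⁻¹| := by
        rw [add_sub_cancel_right]
    _ ≤ ε' * (π / c) := hkey
    _ = ε / 2 := by
        rw [hε'def]
        field_simp
    _ < ε := by linarith

end OhsawaAux

namespace OhsawaAux
open MeasureTheory Filter Real Set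

lemma insertNth_last_castSucc {m : ℕ} (w : ℂ) (z' : Fin m → ℂ) (j : Fin m) :
    Fin.insertNth (α := fun _ => ℂ) (Fin.last m) w z' (Fin.castSucc j) = z' j := by
  rw [show (Fin.castSucc j) = (Fin.last m).succAbove j by rw [Fin.succAbove_last]]
  simp

lemma continuous_insertNth_last {m : ℕ} (z' : Fin m → ℂ) :
    Continuous fun w : ℂ => Fin.insertNth (α := fun _ => ℂ) (Fin.last m) w z' := by
  apply continuous_pi
  intro i
  cases i using Fin.lastCases with
  | last => simp only [Fin.insertNth_apply_same]; exact continuous_id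
  | cast j => simp only [insertNth_last_castSucc]; exact continuous_const

end OhsawaAux

open MeasureTheory Filter Real OhsawaAux

/-- Lemma 3.4 of the paper: in the snc local model, the limit defining the
Ohsawa measure equals `π ∫ g ∏ |z'_k|^{-2 a_k}` for every admissible datum
`(g, g̃)`.  Here `ℂⁿ` is `Fin n → ℂ`, `Y = {z_n = 0}`, `D = ⋃_{k<N} {z_k = 0}`,
and `ψ z = log(|z_n|² ∏_{k<N} |z_k|^{2 a_k})`. -/
theorem ohsawa_measure_snc_model
    (n N : ℕ) (hn : 1 ≤ n) (hN : N ≤ n - 1)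
    (a : Fin N → ℝ) (ha : ∀ k, 0 ≤ a k)
    (ψ : (Fin n → ℂ) → ℝ)
    (hψ : ∀ z : Fin n → ℂ, ψ z =
      Real.log ((‖z ⟨n - 1, by omega⟩‖) ^ 2 *
        ∏ k : Fin N, ‖z (Fin.castLE (hN.trans (Nat.sub_le n 1)) k)‖ ^ (2 * a k)))
    -- the admissible datum (g, g̃) :
    (g : (Fin (n - 1) → ℂ) → ℝ) (gext : (Fin n → ℂ) → ℝ)
    (hg : Continuous g) (hgsupp : HasCompactSupport g)
    (hgsub : tsupport g ⊆ {z' : Fin (n - 1) → ℂ |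
      (∀ i, ‖z' i‖ < 1) ∧ ∀ k : Fin N, z' (Fin.castLE hN k) ≠ 0})
    (hgext : Continuous gext) (hgextsupp : HasCompactSupport gext)
    (hgextD : ∀ z ∈ tsupport gext, ∀ k : Fin N,
      z (Fin.castLE (hN.trans (Nat.sub_le n 1)) k) ≠ 0)
    (hrestr : ∀ z' : Fin (n - 1) → ℂ, (∀ k : Fin N, z' (Fin.castLE hN k) ≠ 0) →
      gext (fun i : Fin n => if h : (i : ℕ) < n - 1 then z' ⟨i, h⟩ else 0) = g z') :
    Tendsto (fun t : ℝ =>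
        ∫ z in {z : Fin n → ℂ | (∀ i, ‖z i‖ < 1) ∧
            t < ψ z ∧ ψ z < t + 1}, gext z * Real.exp (-ψ z))
      atBot
      (nhds (π * ∫ z' : Fin (n - 1) → ℂ,
        g z' * ∏ k : Fin N, ‖z' (Fin.castLE hN k)‖ ^ (-(2 * a k)))) := by
  classical
  obtain ⟨m, rfl⟩ : ∃ m, n = m + 1 := ⟨n - 1, by omega⟩
  set e := MeasurableEquiv.piFinSuccAbove (fun _ : Fin (m + 1) => ℂ) (Fin.last m) with he
  set c : (Fin m → ℂ) → ℝ :=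
    fun z' => ∏ k : Fin N, ‖z' (Fin.castLE hN k)‖ ^ (2 * a k) with hcdef
  have hc_cont : Continuous c := by
    apply continuous_finset_prod
    intro k _
    exact (continuous_norm.comp (continuous_apply _)).rpow_const
      (fun _ => Or.inr (by have := ha k; positivity))
  have hcpos : ∀ z' : Fin m → ℂ, (∀ k : Fin N, z' (Fin.castLE hN k) ≠ 0) → 0 < c z' := by
    intro z' hz'
    apply Finset.prod_pos
    intro k _
    exact Real.rpow_pos_of_pos (norm_pos_iff.mpr (hz' k)) _
  -- the symm of e is insertNth
  have hesymm : ∀ (w : ℂ) (z' : Fin m → ℂ),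
      e.symm (w, z') = Fin.insertNth (α := fun _ => ℂ) (Fin.last m) w z' := fun _ _ => rfl
  have hlastidx : (⟨m + 1 - 1, by omega⟩ : Fin (m + 1)) = Fin.last m := rfl
  have hψJ : ∀ (w : ℂ) (z' : Fin m → ℂ),
      ψ (e.symm (w, z')) = Real.log (‖w‖ ^ 2 * c z') := by
    intro w z'
    rw [hψ (e.symm (w, z')), hesymm]
    have h1 : Fin.insertNth (α := fun _ => ℂ) (Fin.last m) w z'
        (⟨m + 1 - 1, by omega⟩ : Fin (m + 1)) = w := by
      rw [hlastidx, Fin.insertNth_apply_same]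
    have h2 : ∀ k : Fin N, Fin.insertNth (α := fun _ => ℂ) (Fin.last m) w z'
        (Fin.castLE (hN.trans (Nat.sub_le (m + 1) 1)) k) = z' (Fin.castLE hN k) := by
      intro k
      rw [show (Fin.castLE (hN.trans (Nat.sub_le (m + 1) 1)) k : Fin (m + 1))
          = Fin.castSucc (Fin.castLE hN k) from rfl]
      exact insertNth_last_castSucc w z' (Fin.castLE hN k)
    rw [h1]
    congr 2
    exact Finset.prod_congr rfl fun k _ => by rw [h2 k]
  have hψm : Measurable ψ := by
    rw [funext hψ]
    apply Real.measurable_log.comp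
    apply Continuous.measurable
    apply Continuous.mul
    · exact (continuous_norm.comp (continuous_apply _)).pow 2
    · exact continuous_finset_prod _ fun k _ =>
        (continuous_norm.comp (continuous_apply _)).rpow_const
          (fun _ => Or.inr (by have := ha k; positivity))
  set St : ℝ → Set (Fin (m + 1) → ℂ) := fun t =>
    {z | (∀ i, ‖z i‖ < 1) ∧ t < ψ z ∧ ψ z < t + 1} with hStdef
  have hS : ∀ t, MeasurableSet (St t) := by
    intro t
    have h1 : MeasurableSet {z : Fin (m+1) → ℂ | ∀ i, ‖z i‖ < 1} := by
      rw [show {z : Fin (m+1) → ℂ | ∀ i, ‖z i‖ < 1}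
          = ⋂ i, {z | ‖z i‖ < 1} by ext z; simp]
      exact MeasurableSet.iInter fun i =>
        (continuous_norm.comp (continuous_apply i)).measurable measurableSet_Iio
    have h2 : MeasurableSet {z : Fin (m+1) → ℂ | t < ψ z} :=
      measurableSet_lt measurable_const hψm
    have h3 : MeasurableSet {z : Fin (m+1) → ℂ | ψ z < t + 1} :=
      measurableSet_lt hψm measurable_const
    exact h1.inter (h2.inter h3)
  set Φ : ℝ → (Fin (m + 1) → ℂ) → ℝ :=
    fun t => Set.indicator (St t) (fun z => gext z * rexp (-ψ z)) with hΦdef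
  obtain ⟨M, hM⟩ := hgextsupp.exists_bound_of_continuous hgext
  have hM' : ∀ z, |gext z| ≤ M := fun z => by
    have := hM z; rwa [Real.norm_eq_abs] at this
  have hM0 : 0 ≤ M := le_trans (abs_nonneg _) (hM' 0)
  have hΦint : ∀ t, Integrable (Φ t) := by
    intro t
    have hmeas : AEStronglyMeasurable (Φ t) volume :=
      ((hgext.measurable.mul (Real.measurable_exp.comp hψm.neg)).indicator
        (hS t)).aestronglyMeasurable
    have hgint : Integrable (fun z => rexp (-t) * ‖gext z‖) :=
      ((hgext.norm.integrable_of_hasCompactSupport hgextsupp.norm).const_mul _)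
    apply hgint.mono' hmeas
    filter_upwards with z
    by_cases hz : z ∈ St t
    · rw [hΦdef]
      simp only [Set.indicator_of_mem hz, Real.norm_eq_abs, abs_mul,
        abs_of_pos (Real.exp_pos _)]
      rw [mul_comm (rexp (-t))]
      exact mul_le_mul_of_nonneg_left (Real.exp_le_exp.mpr (by linarith [hz.2.1]))
        (abs_nonneg _)
    · rw [hΦdef]
      simp only [Set.indicator_of_notMem hz, Real.norm_eq_abs, abs_zero]
      positivity
  have hep : MeasurePreserving (⇑e.symm)
      (volume : Measure (ℂ × (Fin m → ℂ))) (volume : Measure (Fin (m+1) → ℂ)) :=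
    (volume_preserving_piFinSuccAbove (fun _ : Fin (m + 1) => ℂ) (Fin.last m)).symm e
  have hΦprodint : ∀ t, Integrable (fun p : ℂ × (Fin m → ℂ) => Φ t (e.symm p)) := by
    intro t
    exact (hep.integrable_comp_emb (MeasurableEquiv.measurableEmbedding _)).mpr (hΦint t)
  set I : ℝ → (Fin m → ℂ) → ℝ := fun t z' => ∫ w, Φ t (e.symm (w, z')) with hIdef
  have hFubini : ∀ t, (∫ z in St t, gext z * rexp (-ψ z)) = ∫ z', I t z' := by
    intro t
    calc ∫ z in St t, gext z * rexp (-ψ z)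
        = ∫ z, Φ t z := (integral_indicator (hS t)).symm
      _ = ∫ p, Φ t (e.symm p) :=
          (hep.integral_comp (MeasurableEquiv.measurableEmbedding _) (Φ t)).symm
      _ = ∫ z', I t z' := by
          rw [Measure.volume_eq_prod]
          exact MeasureTheory.integral_prod_symm _
            ((Measure.volume_eq_prod ℂ (Fin m → ℂ)) ▸ hΦprodint t)
  -- membership of insertNth in St t
  have hmemSt : ∀ (t : ℝ) (w : ℂ) (z' : Fin m → ℂ), (∀ j, ‖z' j‖ < 1) →
      (e.symm (w, z') ∈ St t ↔ w ∈ A (c z') t) := by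
    intro t w z' hz1
    constructor
    · rintro ⟨hall, h1, h2⟩
      rw [hψJ w z'] at h1 h2
      refine ⟨?_, h1, h2⟩
      have := hall (Fin.last m)
      rwa [hesymm, Fin.insertNth_apply_same] at this
    · rintro ⟨hw1, h1, h2⟩
      refine ⟨?_, ?_, ?_⟩
      · intro i
        cases i using Fin.lastCases with
        | last => rwa [hesymm, Fin.insertNth_apply_same]
        | cast j => rw [hesymm, insertNth_last_castSucc]; exact hz1 j
      · rwa [hψJ w z']
      · rwa [hψJ w z']
  have hinner : ∀ (t : ℝ) (z' : Fin m → ℂ), (∀ j, ‖z' j‖ < 1) →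
      I t z' = ∫ w in A (c z') t,
        gext (e.symm (w, z')) * rexp (-Real.log (‖w‖ ^ 2 * c z')) := by
    intro t z' hz1
    simp only [hIdef]
    rw [← integral_indicator (measurableSet_A (c z') t)]
    congr 1
    funext w
    simp only [hΦdef]
    by_cases hw : w ∈ A (c z') t
    · rw [Set.indicator_of_mem hw,
        Set.indicator_of_mem ((hmemSt t w z' hz1).mpr hw), hψJ w z']
    · rw [Set.indicator_of_notMem hw,
        Set.indicator_of_notMem (fun hmem => hw ((hmemSt t w z' hz1).mp hmem))]
  have hinner0 : ∀ (t : ℝ) (z' : Fin m → ℂ), ¬(∀ j, ‖z' j‖ < 1) →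
      I t z' = 0 := by
    intro t z' hz1
    simp only [hIdef]
    have : ∀ w : ℂ, Φ t (e.symm (w, z')) = 0 := by
      intro w
      apply Set.indicator_of_notMem
      rintro ⟨hall, -, -⟩
      apply hz1
      intro j
      have := hall (Fin.castSucc j)
      rwa [hesymm, insertNth_last_castSucc] at this
    simp only [this, integral_zero]
  -- continuity of the slice of gext
  have hslice_cont : ∀ z' : Fin m → ℂ, Continuous fun w : ℂ => gext (e.symm (w, z')) := by
    intro z'
    have : (fun w : ℂ => gext (e.symm (w, z')))
        = fun w : ℂ => gext (Fin.insertNth (α := fun _ => ℂ) (Fin.last m) w z') := by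
      funext w; rw [hesymm]
    rw [this]
    exact hgext.comp (continuous_insertNth_last z')
  -- value of the slice at 0
  have hslice0 : ∀ z' : Fin m → ℂ, (∀ k : Fin N, z' (Fin.castLE hN k) ≠ 0) →
      gext (e.symm (0, z')) = g z' := by
    intro z' hz'
    have harg : e.symm ((0 : ℂ), z')
        = fun i : Fin (m + 1) => if h : (i : ℕ) < m + 1 - 1 then z' ⟨i, h⟩ else 0 := by
      rw [hesymm]
      funext i
      cases i using Fin.lastCases with
      | last =>
        rw [Fin.insertNth_apply_same, dif_neg]
        simp [Fin.last]
      | cast j =>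
        rw [insertNth_last_castSucc, dif_pos (by simpa using j.isLt)]
        exact congrArg z' (Fin.ext rfl)
    rw [harg]
    exact hrestr z' hz'
  -- the target density
  set φ : (Fin m → ℂ) → ℝ := fun z' => π * g z' / c z' with hφdef
  -- g vanishes where some coordinate is ≥ 1 or some z'_k = 0
  have hgzero1 : ∀ z' : Fin m → ℂ, ¬(∀ j, ‖z' j‖ < 1) → g z' = 0 := by
    intro z' hz1
    by_contra hgz
    exact hz1 (hgsub (subset_tsupport g (Function.mem_support.mpr hgz))).1
  have hgzero2 : ∀ z' : Fin m → ℂ, ¬(∀ k : Fin N, z' (Fin.castLE hN k) ≠ 0) → g z' = 0 := by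
    intro z' hz1
    by_contra hgz
    exact hz1 (hgsub (subset_tsupport g (Function.mem_support.mpr hgz))).2
  -- a.e. pointwise limit
  have h_lim : ∀ᵐ z' : Fin m → ℂ,
      Tendsto (fun t => I t z') atBot (nhds (φ z')) := by
    have hZ : volume (⋃ k : Fin N, {z' : Fin m → ℂ | z' (Fin.castLE hN k) = 0}) = 0 := by
      apply measure_iUnion_null
      intro k
      rw [MeasureTheory.volume_pi]
      exact Measure.pi_hyperplane _ _ 0
    filter_upwards [compl_mem_ae_iff.mpr hZ] with z' hz'
    have hz'' : ∀ k : Fin N, z' (Fin.castLE hN k) ≠ 0 := by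
      intro k hk
      exact hz' (Set.mem_iUnion.mpr ⟨k, hk⟩)
    by_cases hz1 : ∀ j, ‖z' j‖ < 1
    · have hcz : 0 < c z' := hcpos z' hz''
      have hT := tendsto1D hcz (hslice_cont z')
      rw [hslice0 z' hz''] at hT
      have heq : (fun t => I t z') = fun t => ∫ w in A (c z') t,
          gext (e.symm (w, z')) * rexp (-Real.log (‖w‖ ^ 2 * c z')) :=
        funext fun t => hinner t z' hz1
      rw [heq, hφdef]
      exact hT
    · have heq : (fun t => I t z') = fun _ => (0:ℝ) := funext fun t => hinner0 t z' hz1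
      rw [heq]
      simp only [hφdef]
      rw [hgzero1 z' hz1]
      simpa using tendsto_const_nhds
  -- measurability
  have h_meas : ∀ᶠ t in (atBot : Filter ℝ), AEStronglyMeasurable (fun z' => I t z') volume := by
    apply Eventually.of_forall
    intro t
    have := ((Measure.volume_eq_prod ℂ (Fin m → ℂ)) ▸ hΦprodint t).integral_prod_right
    exact this.aestronglyMeasurable
  -- handle the case gext = 0 separately for the bound
  by_cases hge0 : gext = 0
  · -- everything is zero
    have hg0 : ∀ z', g z' = 0 := by
      intro z'
      by_cases hz'' : ∀ k : Fin N, z' (Fin.castLE hN k) ≠ 0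
      · rw [← hrestr z' hz'', hge0]; rfl
      · exact hgzero2 z' hz''
    have hF0 : ∀ t : ℝ, (∫ z in St t, gext z * rexp (-ψ z)) = 0 := by
      intro t
      rw [hge0]
      simp
    have : (fun t : ℝ => ∫ z in St t, gext z * rexp (-ψ z)) = fun _ => (0:ℝ) :=
      funext hF0
    rw [this]
    have h0 : (∫ z' : Fin m → ℂ, g z' * ∏ k : Fin N,
        ‖z' (Fin.castLE hN k)‖ ^ (-(2 * a k))) = 0 := by
      simp only [hg0, zero_mul, integral_zero]
    have : Tendsto (fun _ : ℝ => (0:ℝ)) atBot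
        (nhds (π * ∫ z' : Fin m → ℂ, g z' * ∏ k : Fin N,
          ‖z' (Fin.castLE hN k)‖ ^ (-(2 * a k)))) := by
      rw [h0, mul_zero]
      exact tendsto_const_nhds
    exact this
  -- main case: gext ≠ 0
  have hK'cont : Continuous fun z : Fin (m + 1) → ℂ => (fun j : Fin m => z (Fin.castSucc j)) :=
    continuous_pi fun j => continuous_apply _
  set K' : Set (Fin m → ℂ) :=
    (fun z : Fin (m + 1) → ℂ => fun j : Fin m => z (Fin.castSucc j)) '' tsupport gext
    with hK'def
  have hK'comp : IsCompact K' := hgextsupp.image hK'cont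
  have hK'ne : K'.Nonempty := by
    obtain ⟨z₀, hz₀⟩ := Function.ne_iff.mp hge0
    exact ⟨_, Set.mem_image_of_mem _ (subset_tsupport gext (Function.mem_support.mpr hz₀))⟩
  have hK'ne0 : ∀ z' ∈ K', ∀ k : Fin N, z' (Fin.castLE hN k) ≠ 0 := by
    rintro z' ⟨z, hz, rfl⟩ k
    have := hgextD z hz k
    rwa [show (Fin.castLE (hN.trans (Nat.sub_le (m + 1) 1)) k : Fin (m + 1))
        = Fin.castSucc (Fin.castLE hN k) from rfl] at this
  have hK'pos : ∀ z' ∈ K', 0 < c z' := fun z' hz' => hcpos z' (hK'ne0 z' hz')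
  obtain ⟨z₀', hz₀K, hz₀min⟩ := hK'comp.exists_isMinOn hK'ne hc_cont.continuousOn
  set c₀ : ℝ := c z₀' with hc₀def
  have hc₀ : 0 < c₀ := hK'pos z₀' hz₀K
  have hc₀le : ∀ z' ∈ K', c₀ ≤ c z' := fun z' hz' => hz₀min hz'
  -- projection identity
  have hproj : ∀ (w : ℂ) (z' : Fin m → ℂ),
      (fun j : Fin m => (e.symm (w, z')) (Fin.castSucc j)) = z' := by
    intro w z'
    funext j
    rw [hesymm, insertNth_last_castSucc]
  -- vanishing off K'
  have hIzero : ∀ (t : ℝ) (z' : Fin m → ℂ), z' ∉ K' → I t z' = 0 := by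
    intro t z' hzK
    simp only [hIdef]
    have : ∀ w : ℂ, Φ t (e.symm (w, z')) = 0 := by
      intro w
      simp only [hΦdef]
      by_cases hmem : e.symm (w, z') ∈ St t
      · rw [Set.indicator_of_mem hmem]
        by_cases hgx : gext (e.symm (w, z')) = 0
        · rw [hgx, zero_mul]
        · exfalso
          apply hzK
          rw [hK'def]
          refine ⟨e.symm (w, z'), subset_tsupport gext (Function.mem_support.mpr hgx), ?_⟩
          exact hproj w z'
      · rw [Set.indicator_of_notMem hmem]
    simp only [this, integral_zero]
  -- the dominating function
  set G : (Fin m → ℂ) → ℝ := Set.indicator K' (fun _ => π * M / c₀) with hGdef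
  have hK'meas : MeasurableSet K' := hK'comp.isClosed.measurableSet
  have hGint : Integrable G := by
    rw [hGdef]
    apply (integrableOn_const hK'comp.measure_lt_top.ne).integrable_indicator hK'meas
  have h_bound : ∀ᶠ t in (atBot : Filter ℝ), ∀ᵐ z' : Fin m → ℂ, ‖I t z'‖ ≤ G z' := by
    filter_upwards [eventually_le_atBot (-1 : ℝ)] with t ht
    apply ae_of_all
    intro z'
    by_cases hzK : z' ∈ K'
    · rw [hGdef, Set.indicator_of_mem hzK]
      by_cases hz1 : ∀ j, ‖z' j‖ < 1
      · rw [hinner t z' hz1, Real.norm_eq_abs]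
        have hcz : 0 < c z' := hK'pos z' hzK
        have hb := bound1D hcz ht (hslice_cont z') (fun w => hM' _)
        refine le_trans hb ?_
        apply div_le_div_of_nonneg_left (by positivity) hc₀ (hc₀le z' hzK)
      · rw [hinner0 t z' hz1]
        simp only [norm_zero]
        positivity
    · rw [hIzero t z' hzK, hGdef, Set.indicator_of_notMem hzK]
      simp
  -- dominated convergence
  have main := MeasureTheory.tendsto_integral_filter_of_dominated_convergence G
    h_meas h_bound hGint h_lim
  -- identify both sides
  have hL : (fun t : ℝ => ∫ z in St t, gext z * rexp (-ψ z))
      = fun t => ∫ z', I t z' := funext hFubini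
  have hRHS : (∫ z', φ z') = π * ∫ z' : Fin m → ℂ,
      g z' * ∏ k : Fin N, ‖z' (Fin.castLE hN k)‖ ^ (-(2 * a k)) := by
    rw [← MeasureTheory.integral_const_mul]
    apply integral_congr_ae
    apply ae_of_all
    intro z'
    have hprodinv : (∏ k : Fin N, ‖z' (Fin.castLE hN k)‖ ^ (-(2 * a k)))
        = (c z')⁻¹ := by
      rw [hcdef, ← Finset.prod_inv_distrib]
      exact Finset.prod_congr rfl fun k _ => Real.rpow_neg (norm_nonneg _) _
    show φ z' = π * (g z' * ∏ k : Fin N, ‖z' (Fin.castLE hN k)‖ ^ (-(2 * a k)))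
    simp only [hφdef]
    rw [hprodinv]
    ring
  have final2 : Tendsto (fun t => ∫ z in St t, gext z * rexp (-ψ z)) atBot
      (nhds (π * ∫ z' : Fin m → ℂ, g z' * ∏ k : Fin N,
        ‖z' (Fin.castLE hN k)‖ ^ (-(2 * a k)))) := by
    rw [hL, ← hRHS]
    exact main
  exact final2
end

section
/- Let n ≥ 1 be an integer, δ ∈ (0,1), λ₁,…,λ_n ∈ ℝ, and c₁,…,c_n ≥ 0 real numbers with c_j > 0 for at least one j. Then ∫_{(0,δ)ⁿ} (∏_{i=1}^n r_i^{λ_i}) · (log(∏_{i=1}^n r_i^{c_i}))^{−2} dr₁⋯dr_n < +∞ if and only if the following three conditions hold: (a) λ_i ≥ −1 for every i; (b) whenever λ_i = −1 one has c_i > 0; and (c) there is at most one index i with λ_i = −1. -/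
open MeasureTheory Real Set
open scoped ENNReal

section OneD

-- glue lemmas
lemma lint_ofReal_lt_top_of_integrableOn {g : ℝ → ℝ} {s : Set ℝ}
    (h : IntegrableOn g s volume) :
    ∫⁻ x in s, ENNReal.ofReal (g x) < ⊤ :=
  lt_of_le_of_lt (lintegral_ofReal_le_lintegral_enorm g) h.2

lemma lint_ofReal_eq_top_of_not_integrableOn {g : ℝ → ℝ} {s : Set ℝ}
    (hs : MeasurableSet s) (hm : Measurable g) (h0 : ∀ x ∈ s, 0 ≤ g x)
    (h : ¬ IntegrableOn g s volume) :
    ∫⁻ x in s, ENNReal.ofReal (g x) = ⊤ := by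
  by_contra hne
  refine h ⟨hm.aestronglyMeasurable, ?_⟩
  rw [hasFiniteIntegral_iff_ofReal ((ae_restrict_iff' hs).2 (ae_of_all _ h0))]
  exact lt_top_iff_ne_top.2 hne

lemma lintegral_Ioo_exp_neg {d : ℝ} (hd0 : 0 < d) (g : ℝ → ℝ≥0∞) :
    ∫⁻ x in Set.Ioo (0:ℝ) d, g x
      = ∫⁻ u in Set.Ioi (-Real.log d), ENNReal.ofReal (Real.exp (-u)) * g (Real.exp (-u)) := by
  have himg : (fun u : ℝ => Real.exp (-u)) '' (Set.Ioi (-Real.log d)) = Set.Ioo 0 d := by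
    ext x
    constructor
    · rintro ⟨u, hu, rfl⟩
      refine ⟨Real.exp_pos _, ?_⟩
      have : -u < Real.log d := by simpa using neg_lt_neg (show -Real.log d < u from hu)
      calc Real.exp (-u) < Real.exp (Real.log d) := Real.exp_lt_exp.2 this
        _ = d := Real.exp_log hd0
    · rintro ⟨hx0, hxd⟩
      refine ⟨-Real.log x, ?_, by simp [Real.exp_log hx0]⟩
      simpa using neg_lt_neg (Real.log_lt_log hx0 hxd)
  have hderiv : ∀ u ∈ Set.Ioi (-Real.log d),
      HasDerivWithinAt (fun u : ℝ => Real.exp (-u)) (-Real.exp (-u)) (Set.Ioi (-Real.log d)) u := by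
    intro u _
    have h1 : HasDerivAt (fun u : ℝ => Real.exp (-u)) (Real.exp (-u) * (-1)) u :=
      (Real.hasDerivAt_exp (-u)).comp u (hasDerivAt_neg u)
    simpa using h1.hasDerivWithinAt
  have hinj : Set.InjOn (fun u : ℝ => Real.exp (-u)) (Set.Ioi (-Real.log d)) :=
    (Real.exp_injective.comp neg_injective).injOn
  have := lintegral_image_eq_lintegral_abs_det_fderiv_mul volume measurableSet_Ioi
    (f' := fun u => (1 : ℝ →L[ℝ] ℝ).smulRight (-Real.exp (-u)))
    (fun u hu => (hderiv u hu).hasFDerivWithinAt) hinj g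
  rw [← himg, this]
  refine lintegral_congr fun u => ?_
  rw [ContinuousLinearMap.smulRight_one_eq_toSpanSingleton, ContinuousLinearMap.det_toSpanSingleton, abs_neg, abs_of_pos (Real.exp_pos _)]

variable {d : ℝ} (hd0 : 0 < d) (hd1 : d < 1)

lemma neg_log_pos (hd0 : 0 < d) (hd1 : d < 1) : 0 < -Real.log d := by
  have := Real.log_neg hd0 hd1; linarith

include hd0 hd1 in
lemma L2 {c S : ℝ} (hc : 0 < c) (hS : S ≤ 0) :
    ∫⁻ t in Set.Ioo (0:ℝ) d,
      ENNReal.ofReal (t ^ (-1:ℝ) * ((c * Real.log t + S)^2)⁻¹) < ⊤ := by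
  have ha : 0 < -Real.log d := neg_log_pos hd0 hd1
  rw [lintegral_Ioo_exp_neg hd0]
  have heq : ∀ u : ℝ,
      ENNReal.ofReal (Real.exp (-u)) *
        ENNReal.ofReal (Real.exp (-u) ^ (-1:ℝ) * ((c * Real.log (Real.exp (-u)) + S)^2)⁻¹)
      = ENNReal.ofReal (((c * (-u) + S)^2)⁻¹) := by
    intro u
    rw [← ENNReal.ofReal_mul (Real.exp_nonneg _), Real.log_exp, Real.rpow_neg_one,
      ← Real.exp_neg, ← mul_assoc, ← Real.exp_add]
    norm_num
  simp_rw [heq]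
  have hle : ∀ u ∈ Set.Ioi (-Real.log d),
      ENNReal.ofReal (((c * (-u) + S)^2)⁻¹) ≤ ENNReal.ofReal (c⁻¹ * c⁻¹ * u ^ (-2:ℝ)) := by
    intro u hu
    have hu0 : 0 < u := lt_trans ha hu
    apply ENNReal.ofReal_le_ofReal
    have h1 : c * u ≤ -(c * (-u) + S) := by nlinarith
    have h2 : (c * u)^2 ≤ (c * (-u) + S)^2 := by
      nlinarith [mul_self_le_mul_self (show (0:ℝ) ≤ c*u by positivity) h1]
    have h3 : (0:ℝ) < (c*u)^2 := by positivity
    calc ((c * (-u) + S)^2)⁻¹ ≤ ((c*u)^2)⁻¹ := by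
          apply inv_anti₀ h3 h2
      _ = c⁻¹ * c⁻¹ * u ^ (-2:ℝ) := by
          rw [Real.rpow_neg hu0.le, mul_pow]
          rw [show ((2:ℝ)) = ((2:ℕ):ℝ) by norm_num, Real.rpow_natCast]
          field_simp
  calc ∫⁻ u in Set.Ioi (-Real.log d), ENNReal.ofReal (((c * (-u) + S)^2)⁻¹)
      ≤ ∫⁻ u in Set.Ioi (-Real.log d), ENNReal.ofReal (c⁻¹ * c⁻¹ * u ^ (-2:ℝ)) := by
        refine lintegral_mono_ae ((ae_restrict_iff' measurableSet_Ioi).2 (ae_of_all _ hle))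
    _ < ⊤ := by
        apply lint_ofReal_lt_top_of_integrableOn
        exact (((integrableOn_Ioi_rpow_iff ha).2 (by norm_num)).const_mul _)

include hd0 hd1 in
lemma L3 {l c S : ℝ} (hl : l < -1) (hc : 0 ≤ c) (hS : S ≤ 0) (hcs : 0 < c - S) :
    ∫⁻ t in Set.Ioo (0:ℝ) d,
      ENNReal.ofReal (t ^ l * ((c * Real.log t + S)^2)⁻¹) = ⊤ := by
  have ha : 0 < -Real.log d := neg_log_pos hd0 hd1
  rw [lintegral_Ioo_exp_neg hd0]
  set ε : ℝ := -(1 + l) with hε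
  have hε0 : 0 < ε := by simp [hε]; linarith
  set M : ℝ := (c - S)^2 with hM
  have hM0 : 0 < M := by positivity
  set U : ℝ := max (-Real.log d) (max 1 (6 * M / ε^3)) with hU
  have hUa : -Real.log d ≤ U := le_max_left _ _
  have hU1 : 1 ≤ U := le_trans (le_max_left _ _) (le_max_right _ _)
  have hUM : 6 * M / ε^3 ≤ U := le_trans (le_max_right _ _) (le_max_right _ _)
  have hpt : ∀ u ∈ Set.Ioi U, (1:ℝ≥0∞) ≤
      ENNReal.ofReal (Real.exp (-u)) *
        ENNReal.ofReal (Real.exp (-u) ^ l * ((c * Real.log (Real.exp (-u)) + S)^2)⁻¹) := by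
    intro u hu
    have hu1 : 1 < u := lt_of_le_of_lt hU1 hu
    have hu0 : 0 < u := lt_trans one_pos hu1
    have heq : ENNReal.ofReal (Real.exp (-u)) *
        ENNReal.ofReal (Real.exp (-u) ^ l * ((c * Real.log (Real.exp (-u)) + S)^2)⁻¹)
        = ENNReal.ofReal (Real.exp (ε * u) * ((c * (-u) + S)^2)⁻¹) := by
      rw [← ENNReal.ofReal_mul (Real.exp_nonneg _), Real.log_exp,
        ← Real.exp_log (show (0:ℝ) < Real.exp (-u) ^ l from
          Real.rpow_pos_of_pos (Real.exp_pos _) _), Real.log_rpow (Real.exp_pos _),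
        Real.log_exp, ← mul_assoc, ← Real.exp_add]
      rw [hε]
      ring_nf
    rw [heq]
    rw [show (1:ℝ≥0∞) = ENNReal.ofReal 1 by simp]
    apply ENNReal.ofReal_le_ofReal
    -- exp (ε u) ≥ ε³u³/6, (c(-u)+S)² ≤ M u²
    have hexp : ε^3 * u^3 / 6 ≤ Real.exp (ε * u) := by
      have h6 : ∑ i ∈ Finset.range 4, (ε*u) ^ i / (Nat.factorial i) ≤ Real.exp (ε*u) :=
        Real.sum_le_exp_of_nonneg (by positivity) 4
      have : (ε*u)^3/6 ≤ ∑ i ∈ Finset.range 4, (ε*u) ^ i / (Nat.factorial i) := by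
        rw [Finset.sum_range_succ, Finset.sum_range_succ, Finset.sum_range_succ,
          Finset.sum_range_succ]
        simp [Nat.factorial]
        positivity
      nlinarith [this, h6]
    have hsq : (c * (-u) + S)^2 ≤ M * u^2 := by
      have : -(c * (-u) + S) ≤ (c - S) * u := by nlinarith
      have h0 : 0 ≤ -(c * (-u) + S) := by nlinarith
      nlinarith
    have hX : 0 < c*u - S := by nlinarith [mul_le_mul_of_nonneg_left hu1.le hc]
    have hsq0 : (0:ℝ) < (c * (-u) + S)^2 := by
      have h' : (c * (-u) + S)^2 = (c*u - S)^2 := by ring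
      rw [h']; positivity
    have h1 : (M * u^2)⁻¹ ≤ ((c * (-u) + S)^2)⁻¹ := by
      apply inv_anti₀ hsq0 hsq
    have h2 : ε^3 * u^3 / 6 * (M * u^2)⁻¹ ≤ Real.exp (ε * u) * ((c * (-u) + S)^2)⁻¹ := by
      apply mul_le_mul hexp h1 (by positivity) (Real.exp_nonneg _)
    refine le_trans ?_ h2
    have h6M : 6 * M ≤ ε^3 * u := by
      have : 6 * M / ε^3 ≤ u := le_trans hUM hu.le
      rw [div_le_iff₀ (by positivity)] at this
      linarith
    have key : ε^3 * u^3 / 6 * (M * u^2)⁻¹ = ε^3 * u / (6 * M) := by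
      field_simp
    rw [key, le_div_iff₀ (by positivity)]
    linarith
  have hsub : Set.Ioi U ⊆ Set.Ioi (-Real.log d) := fun x hx => lt_of_le_of_lt hUa hx
  rw [eq_top_iff]
  calc (⊤:ℝ≥0∞) = ∫⁻ _ in Set.Ioi U, (1:ℝ≥0∞) := by
        rw [setLIntegral_one, Real.volume_Ioi]
    _ ≤ ∫⁻ u in Set.Ioi U, ENNReal.ofReal (Real.exp (-u)) *
          ENNReal.ofReal (Real.exp (-u) ^ l * ((c * Real.log (Real.exp (-u)) + S)^2)⁻¹) :=
        lintegral_mono_ae ((ae_restrict_iff' measurableSet_Ioi).2 (ae_of_all _ hpt))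
    _ ≤ _ := lintegral_mono_set hsub

include hd0 in
lemma L1 {l : ℝ} (hl : -1 < l) :
    ∫⁻ t in Set.Ioo (0:ℝ) d, ENNReal.ofReal (t ^ l) < ⊤ :=
  lint_ofReal_lt_top_of_integrableOn ((intervalIntegral.integrableOn_Ioo_rpow_iff hd0).2 hl)

include hd0 hd1 in
lemma L4 {S : ℝ} (hS : S < 0) :
    ∫⁻ t in Set.Ioo (0:ℝ) d, ENNReal.ofReal (t ^ (-1:ℝ) * (S^2)⁻¹) = ⊤ := by
  rw [lintegral_Ioo_exp_neg hd0]
  have heq : ∀ u : ℝ,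
      ENNReal.ofReal (Real.exp (-u)) * ENNReal.ofReal (Real.exp (-u) ^ (-1:ℝ) * (S^2)⁻¹)
        = ENNReal.ofReal ((S^2)⁻¹) := by
    intro u
    rw [← ENNReal.ofReal_mul (Real.exp_nonneg _), Real.rpow_neg_one, ← Real.exp_neg,
      ← mul_assoc, ← Real.exp_add]
    norm_num
  simp_rw [heq]
  rw [setLIntegral_const, Real.volume_Ioi, ENNReal.mul_top]
  simp only [ne_eq, ENNReal.ofReal_eq_zero, not_le]
  have hS' : S ≠ 0 := ne_of_lt hS
  positivity

include hd0 hd1 in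
lemma L5 {c A : ℝ} (hc : 0 < c) (hA : 0 ≤ A) :
    ENNReal.ofReal ((4 * c * (c * (-Real.log d) + A))⁻¹)
      ≤ ∫⁻ u in Set.Ioo (0:ℝ) d,
          ENNReal.ofReal (u ^ (-1:ℝ) * ((c * Real.log u - A)^2)⁻¹) := by
  have ha : 0 < -Real.log d := neg_log_pos hd0 hd1
  set a : ℝ := -Real.log d with haa
  set R : ℝ := c * a + A with hR
  have hR0 : 0 < R := by positivity
  set T : ℝ := R / c with hT
  have hT0 : 0 < T := by positivity
  rw [lintegral_Ioo_exp_neg hd0]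
  have heq : ∀ v : ℝ,
      ENNReal.ofReal (Real.exp (-v)) *
        ENNReal.ofReal (Real.exp (-v) ^ (-1:ℝ) * ((c * Real.log (Real.exp (-v)) - A)^2)⁻¹)
      = ENNReal.ofReal (((c * v + A)^2)⁻¹) := by
    intro v
    rw [← ENNReal.ofReal_mul (Real.exp_nonneg _), Real.log_exp, Real.rpow_neg_one,
      ← Real.exp_neg, ← mul_assoc, ← Real.exp_add]
    norm_num
    congr 1
    ring
  simp_rw [heq]
  have hsub : Set.Ioo a (a + T) ⊆ Set.Ioi a := fun x hx => hx.1
  refine le_trans ?_ (lintegral_mono_set hsub)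
  have hpt : ∀ v ∈ Set.Ioo a (a + T),
      ENNReal.ofReal ((4 * R^2)⁻¹) ≤ ENNReal.ofReal (((c * v + A)^2)⁻¹) := by
    intro v hv
    apply ENNReal.ofReal_le_ofReal
    have hv2 : c * v + A ≤ 2 * R := by
      have : c * v ≤ c * (a + T) := by nlinarith [hv.2]
      have hcT : c * T = R := by rw [hT]; field_simp [hc.ne']
      nlinarith
    have hv0 : 0 < c * v + A := by nlinarith [hv.1, ha]
    have : (c*v+A)^2 ≤ 4 * R^2 := by nlinarith
    apply inv_anti₀ (by positivity) this
  calc ENNReal.ofReal ((4 * c * (c * a + A))⁻¹)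
      = ENNReal.ofReal ((4*R^2)⁻¹) * volume (Set.Ioo a (a + T)) := by
        rw [Real.volume_Ioo, ← ENNReal.ofReal_mul (by positivity)]
        congr 1
        have : a + T - a = T := by ring
        rw [this, hT]
        field_simp
        ring
    _ = ∫⁻ _ in Set.Ioo a (a + T), ENNReal.ofReal ((4*R^2)⁻¹) := by
        rw [setLIntegral_const]
    _ ≤ ∫⁻ v in Set.Ioo a (a + T), ENNReal.ofReal (((c * v + A)^2)⁻¹) :=
        lintegral_mono_ae ((ae_restrict_iff' measurableSet_Ioo).2 (ae_of_all _ hpt))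

include hd0 hd1 in
lemma L6 {c B : ℝ} (hc : 0 < c) (hB : 0 < B) :
    ∫⁻ t in Set.Ioo (0:ℝ) d,
      ENNReal.ofReal (t ^ (-1:ℝ) * (c * (-Real.log t) + B)⁻¹) = ⊤ := by
  have ha : 0 < -Real.log d := neg_log_pos hd0 hd1
  set a : ℝ := -Real.log d with haa
  rw [lintegral_Ioo_exp_neg hd0]
  have heq : ∀ u : ℝ,
      ENNReal.ofReal (Real.exp (-u)) *
        ENNReal.ofReal (Real.exp (-u) ^ (-1:ℝ) * (c * (-Real.log (Real.exp (-u))) + B)⁻¹)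
      = ENNReal.ofReal ((c * u + B)⁻¹) := by
    intro u
    rw [← ENNReal.ofReal_mul (Real.exp_nonneg _), Real.log_exp, Real.rpow_neg_one,
      ← Real.exp_neg, ← mul_assoc, ← Real.exp_add]
    norm_num
  simp_rw [heq]
  set K : ℝ := (c + B / a)⁻¹ with hK
  have hK0 : 0 < K := by positivity
  have hpt : ∀ u ∈ Set.Ioi a,
      ENNReal.ofReal (K * u⁻¹) ≤ ENNReal.ofReal ((c * u + B)⁻¹) := by
    intro u hu
    have hu0 : 0 < u := lt_trans ha hu
    apply ENNReal.ofReal_le_ofReal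
    have h1 : c * u + B ≤ (c + B/a) * u := by
      have hBa : B * a ≤ B * u := by nlinarith [hu.out]
      rw [← sub_nonneg]
      have h2 : (c + B/a) * u - (c*u+B) = (B*u - B*a)/a := by field_simp; ring
      rw [h2]
      exact div_nonneg (by linarith) ha.le
    calc K * u⁻¹ = ((c + B/a) * u)⁻¹ := by rw [hK, mul_inv]
      _ ≤ (c * u + B)⁻¹ := inv_anti₀ (by positivity) h1
  rw [eq_top_iff]
  have htop : ∫⁻ u in Set.Ioi a, ENNReal.ofReal (K * u⁻¹) = ⊤ := by
    have hni : ¬ IntegrableOn (fun u : ℝ => K * u⁻¹) (Set.Ioi a) volume := by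
      intro h
      have h2 : IntegrableOn (fun u : ℝ => u⁻¹) (Set.Ioi a) volume := by
        have h' : IntegrableOn (fun u : ℝ => K⁻¹ * (K * u⁻¹)) (Set.Ioi a) volume :=
          h.const_mul K⁻¹
        refine h'.congr_fun (fun x _ => ?_) measurableSet_Ioi
        field_simp
      have h3 : IntegrableOn (fun u : ℝ => u ^ (-1:ℝ)) (Set.Ioi a) volume := by
        refine h2.congr_fun (fun x _ => ?_) measurableSet_Ioi
        rw [Real.rpow_neg_one]
      have := (integrableOn_Ioi_rpow_iff ha).1 h3
      linarith
    exact lint_ofReal_eq_top_of_not_integrableOn measurableSet_Ioi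
      (measurable_const.mul measurable_inv)
      (fun x hx => by
        have : 0 < x := lt_trans ha hx
        positivity) hni
  rw [← htop]
  exact lintegral_mono_ae ((ae_restrict_iff' measurableSet_Ioi).2 (ae_of_all _ hpt))

end OneD

section Marginal

variable {ι : Type*} [Fintype ι] [DecidableEq ι]

local notation "μι" => (fun _ : ι => (volume : Measure ℝ))

lemma my_lmarginal_const_mul (a : ℝ≥0∞) {f : (ι → ℝ) → ℝ≥0∞} (hf : Measurable f)
    (s : Finset ι) (x : ι → ℝ) :
    MeasureTheory.lmarginal μι s (fun y => a * f y) x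
      = a * MeasureTheory.lmarginal μι s f x := by
  simp_rw [MeasureTheory.lmarginal]
  exact lintegral_const_mul a (hf.comp measurable_updateFinset)

lemma my_lmarginal_point_mul {i : ι} {s : Finset ι} (hi : i ∉ s) (h : ℝ → ℝ≥0∞)
    {F : (ι → ℝ) → ℝ≥0∞} (hF : Measurable F) (x : ι → ℝ) :
    MeasureTheory.lmarginal μι s (fun y => h (y i) * F y) x
      = h (x i) * MeasureTheory.lmarginal μι s F x := by
  simp_rw [MeasureTheory.lmarginal]
  have hupd : ∀ y : (k : s) → ℝ, Function.updateFinset x s y i = x i := by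
    intro y
    simp [Function.updateFinset, hi]
  simp_rw [hupd]
  exact lintegral_const_mul _ (hF.comp measurable_updateFinset)

lemma my_lmarginal_prod (g : ι → ℝ → ℝ≥0∞) (hg : ∀ k, Measurable (g k))
    (s : Finset ι) (x : ι → ℝ) :
    MeasureTheory.lmarginal μι s (fun y => ∏ k ∈ s, g k (y k)) x
      = ∏ k ∈ s, ∫⁻ t, g k t := by
  classical
  induction s using Finset.induction_on generalizing x with
  | empty => simp [MeasureTheory.lmarginal_empty]
  | @insert i s hi ih =>
    have hmeas : Measurable fun y : ι → ℝ => ∏ k ∈ s, g k (y k) :=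
      Finset.measurable_prod _ (fun k _ => (hg k).comp (measurable_pi_apply k))
    have hmeas' : Measurable fun y : ι → ℝ => ∏ k ∈ insert i s, g k (y k) :=
      Finset.measurable_prod _ (fun k _ => (hg k).comp (measurable_pi_apply k))
    rw [MeasureTheory.lmarginal_insert _ hmeas' hi]
    have hre : (fun y : ι → ℝ => ∏ k ∈ insert i s, g k (y k))
        = fun y => g i (y i) * ∏ k ∈ s, g k (y k) := by
      funext y
      exact Finset.prod_insert hi
    calc ∫⁻ t, MeasureTheory.lmarginal μι s (fun y : ι → ℝ => ∏ k ∈ insert i s, g k (y k))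
          (Function.update x i t) ∂volume
        = ∫⁻ t, g i t * ∏ k ∈ s, ∫⁻ u, g k u ∂volume := by
          refine lintegral_congr fun t => ?_
          rw [hre, my_lmarginal_point_mul hi _ hmeas, Function.update_self, ih]
      _ = (∫⁻ t, g i t) * ∏ k ∈ s, ∫⁻ u, g k u := lintegral_mul_const _ (hg i)
      _ = ∏ k ∈ insert i s, ∫⁻ t, g k t := by rw [Finset.prod_insert hi]

end Marginal

section Master

lemma pi_lintegral_top {n : ℕ} {d : ℝ} (hd0 : 0 < d) (F : (Fin n → ℝ) → ℝ≥0∞)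
    (hF : Measurable F) (bad : Finset (Fin n))
    (hT : ∀ x : Fin n → ℝ, (∀ k, k ∉ bad → x k ∈ Set.Ioo (d/2) d) →
      MeasureTheory.lmarginal (fun _ : Fin n => (volume : Measure ℝ)) bad F x = ⊤) :
    ∫⁻ x, F x ∂(volume : Measure (Fin n → ℝ)) = ⊤ := by
  classical
  set μ : Fin n → Measure ℝ := fun _ => volume with hμ
  set x₀ : Fin n → ℝ := fun _ => 3*d/4 with hx₀
  have hx0mem : (3*d/4 : ℝ) ∈ Set.Ioo (d/2) d := ⟨by linarith, by linarith⟩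
  have huniv : badᶜ ∪ bad = Finset.univ := by
    ext k; simp [em, or_comm, em (k ∈ bad)]
  rw [MeasureTheory.volume_pi, MeasureTheory.lintegral_eq_lmarginal_univ x₀,
    ← huniv, MeasureTheory.lmarginal_union μ F hF disjoint_compl_left]
  set G := MeasureTheory.lmarginal μ bad F with hG
  set LB : (Fin n → ℝ) → ℝ≥0∞ := fun x =>
    ⊤ * ∏ k ∈ badᶜ, (Set.Ioo (d/2) d).indicator (fun _ => (1:ℝ≥0∞)) (x k) with hLB
  have hLBle : LB ≤ G := by
    intro x
    by_cases hx : ∀ k ∈ badᶜ, x k ∈ Set.Ioo (d/2) d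
    · rw [hT x (fun k hk => hx k (Finset.mem_compl.2 hk))]
      exact le_top
    · push_neg at hx
      obtain ⟨k, hk, hxk⟩ := hx
      have hz : LB x = 0 := by
        show ⊤ * ∏ k ∈ badᶜ, (Set.Ioo (d/2) d).indicator (fun _ => (1:ℝ≥0∞)) (x k) = 0
        have h0 : ((Set.Ioo (d/2) d).indicator (fun _ => (1:ℝ≥0∞)) (x k)) = 0 :=
          Set.indicator_of_notMem hxk _
        rw [Finset.prod_eq_zero hk h0, mul_zero]
      rw [hz]
      exact zero_le
  have hLBval : MeasureTheory.lmarginal μ badᶜ LB x₀ = ⊤ := by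
    have hgmeas : ∀ k : Fin n, Measurable fun t : ℝ =>
        (Set.Ioo (d/2) d).indicator (fun _ => (1:ℝ≥0∞)) t :=
      fun k => measurable_const.indicator measurableSet_Ioo
    have hpm : Measurable fun x : Fin n → ℝ =>
        ∏ k ∈ badᶜ, (Set.Ioo (d/2) d).indicator (fun _ => (1:ℝ≥0∞)) (x k) :=
      Finset.measurable_prod _ (fun k _ => (hgmeas k).comp (measurable_pi_apply k))
    rw [hLB]
    rw [my_lmarginal_const_mul _ hpm, my_lmarginal_prod _ (fun k => hgmeas k)]
    have hval : ∀ k : Fin n, ∫⁻ t, (Set.Ioo (d/2) d).indicator (fun _ => (1:ℝ≥0∞)) t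
        = ENNReal.ofReal (d/2) := by
      intro k
      rw [lintegral_indicator measurableSet_Ioo]
      simp [Real.volume_Ioo]
      congr 1
      ring
    rw [ENNReal.top_mul]
    refine Finset.prod_ne_zero_iff.2 fun k _ => ?_
    rw [hval k]
    simp [ne_eq, ENNReal.ofReal_eq_zero, not_le]
    linarith
  have := MeasureTheory.lmarginal_mono (μ := μ) (s := badᶜ) hLBle x₀
  rw [hLBval] at this
  exact top_le_iff.1 this

end Master

section MainAux

variable {n : ℕ} {δ : ℝ} {lam c : Fin n → ℝ}

lemma comp_update {β : Type*} (F : Fin n → ℝ → β) (x : Fin n → ℝ) (i : Fin n) (t : ℝ) :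
    (fun k => F k (Function.update x i t k)) = Function.update (fun k => F k (x k)) i (F i t) := by
  funext k
  rcases eq_or_ne k i with rfl | hk
  · simp
  · simp [Function.update_of_ne hk]

lemma prod_update_fn {β : Type*} [CommMonoid β] (G : Fin n → ℝ → β) (i : Fin n) (h : ℝ → β)
    (r : Fin n → ℝ) :
    ∏ k, Function.update G i h k (r k) = h (r i) * ∏ k ∈ Finset.univ.erase i, G k (r k) := by
  have : (fun k => Function.update G i h k (r k))
      = Function.update (fun k => G k (r k)) i (h (r i)) := by
    funext k
    rcases eq_or_ne k i with rfl | hk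
    · simp
    · simp [Function.update_of_ne hk]
  calc ∏ k, Function.update G i h k (r k)
      = ∏ k, Function.update (fun k => G k (r k)) i (h (r i)) k :=
        Finset.prod_congr rfl fun k _ => congrFun this k
    _ = h (r i) * ∏ k ∈ Finset.univ \ {i}, G k (r k) :=
        Finset.prod_update_of_mem (Finset.mem_univ i) _ _
    _ = h (r i) * ∏ k ∈ Finset.univ.erase i, G k (r k) := by
        rw [Finset.sdiff_singleton_eq_erase]

lemma f_measurable :
    Measurable (fun r : Fin n → ℝ =>
      (∏ i, r i ^ lam i) * ((Real.log (∏ i, r i ^ c i)) ^ 2)⁻¹) := by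
  apply Measurable.mul
  · exact Finset.measurable_prod _ fun i _ => by fun_prop
  · exact ((Real.measurable_log.comp
      (Finset.measurable_prod _ fun i _ => by fun_prop)).pow_const 2).inv

lemma log_prod_rpow {r : Fin n → ℝ} (hr : ∀ i, 0 < r i) (c : Fin n → ℝ) :
    Real.log (∏ i, r i ^ c i) = ∑ i, c i * Real.log (r i) := by
  rw [Real.log_prod (fun i _ => (Real.rpow_pos_of_pos (hr i) _).ne')]
  exact Finset.sum_congr rfl fun i _ => Real.log_rpow (hr i) _

lemma f_update_eq (x : Fin n → ℝ) (i : Fin n) (t : ℝ) (ht : 0 < t)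
    (hx : ∀ k, k ≠ i → 0 < x k) :
    (∏ k, Function.update x i t k ^ lam k) *
        ((Real.log (∏ k, Function.update x i t k ^ c k)) ^ 2)⁻¹
      = (t ^ lam i *
          ((c i * Real.log t + ∑ k ∈ Finset.univ.erase i, c k * Real.log (x k))^2)⁻¹)
        * ∏ k ∈ Finset.univ.erase i, x k ^ lam k := by
  have hupd : ∀ k, 0 < Function.update x i t k := by
    intro k
    rcases eq_or_ne k i with rfl | hk
    · simpa using ht
    · simpa [Function.update_of_ne hk] using hx k hk
  rw [log_prod_rpow hupd c]
  have h1 : ∑ k, c k * Real.log (Function.update x i t k)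
      = c i * Real.log t + ∑ k ∈ Finset.univ.erase i, c k * Real.log (x k) := by
    calc ∑ k, c k * Real.log (Function.update x i t k)
        = ∑ k, Function.update (fun k => c k * Real.log (x k)) i (c i * Real.log t) k :=
          Finset.sum_congr rfl fun k _ =>
            congrFun (comp_update (fun k s => c k * Real.log s) x i t) k
      _ = _ := by
          rw [Finset.sum_update_of_mem (Finset.mem_univ i), Finset.sdiff_singleton_eq_erase]
  have h2 : ∏ k, Function.update x i t k ^ lam k
      = t ^ lam i * ∏ k ∈ Finset.univ.erase i, x k ^ lam k := by
    calc ∏ k, Function.update x i t k ^ lam k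
        = ∏ k, Function.update (fun k => x k ^ lam k) i (t ^ lam i) k :=
          Finset.prod_congr rfl fun k _ =>
            congrFun (comp_update (fun k s => s ^ lam k) x i t) k
      _ = _ := by
          rw [Finset.prod_update_of_mem (Finset.mem_univ i), Finset.sdiff_singleton_eq_erase]
  rw [h1, h2]
  ring

/-- Evaluation of a one-coordinate slice of the indicator integrand. -/
lemma slice_eval (hδ0 : 0 < δ) (i : Fin n) (x : Fin n → ℝ)
    (hx : ∀ k, k ≠ i → x k ∈ Set.Ioo (0:ℝ) δ) :
    ∫⁻ t, (Set.univ.pi fun _ : Fin n => Set.Ioo (0:ℝ) δ).indicator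
        (fun r => ENNReal.ofReal
          ((∏ k, r k ^ lam k) * ((Real.log (∏ k, r k ^ c k)) ^ 2)⁻¹))
        (Function.update x i t) ∂volume
      = (∫⁻ t in Set.Ioo (0:ℝ) δ,
          ENNReal.ofReal (t ^ lam i *
            ((c i * Real.log t + ∑ k ∈ Finset.univ.erase i, c k * Real.log (x k))^2)⁻¹))
        * ENNReal.ofReal (∏ k ∈ Finset.univ.erase i, x k ^ lam k) := by
  have hind : ∀ t : ℝ,
      (Set.univ.pi fun _ : Fin n => Set.Ioo (0:ℝ) δ).indicator
        (fun r => ENNReal.ofReal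
          ((∏ k, r k ^ lam k) * ((Real.log (∏ k, r k ^ c k)) ^ 2)⁻¹))
        (Function.update x i t)
      = (Set.Ioo (0:ℝ) δ).indicator
          (fun t => ENNReal.ofReal
            ((t ^ lam i *
              ((c i * Real.log t + ∑ k ∈ Finset.univ.erase i, c k * Real.log (x k))^2)⁻¹)
             * ∏ k ∈ Finset.univ.erase i, x k ^ lam k)) t := by
    intro t
    by_cases ht : t ∈ Set.Ioo (0:ℝ) δ
    · rw [Set.indicator_of_mem ht, Set.indicator_of_mem, f_update_eq x i t ht.1
        (fun k hk => (hx k hk).1)]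
      rw [Set.mem_univ_pi]
      intro k
      rcases eq_or_ne k i with rfl | hk
      · simpa using ht
      · simpa [Function.update_of_ne hk] using hx k hk
    · rw [Set.indicator_of_notMem ht, Set.indicator_of_notMem]
      intro hmem
      exact ht (by simpa using hmem i (Set.mem_univ i))
  simp_rw [hind]
  rw [lintegral_indicator measurableSet_Ioo]
  have hmeas : Measurable fun t : ℝ =>
      ENNReal.ofReal (t ^ lam i *
        ((c i * Real.log t + ∑ k ∈ Finset.univ.erase i, c k * Real.log (x k))^2)⁻¹) := by
    apply Measurable.ennreal_ofReal
    have h1 : Measurable fun t : ℝ => t ^ lam i := by fun_prop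
    exact h1.mul
      (((measurable_const.mul Real.measurable_log).add_const _).pow_const 2).inv
  calc ∫⁻ t in Set.Ioo (0:ℝ) δ, ENNReal.ofReal
        ((t ^ lam i *
          ((c i * Real.log t + ∑ k ∈ Finset.univ.erase i, c k * Real.log (x k))^2)⁻¹)
         * ∏ k ∈ Finset.univ.erase i, x k ^ lam k)
      = ∫⁻ t in Set.Ioo (0:ℝ) δ,
          (ENNReal.ofReal (t ^ lam i *
            ((c i * Real.log t + ∑ k ∈ Finset.univ.erase i, c k * Real.log (x k))^2)⁻¹))
          * ENNReal.ofReal (∏ k ∈ Finset.univ.erase i, x k ^ lam k) := by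
        refine setLIntegral_congr_fun measurableSet_Ioo (fun t ht => ?_)
        rw [ENNReal.ofReal_mul]
        exact mul_nonneg (Real.rpow_nonneg ht.1.le _) (inv_nonneg.2 (sq_nonneg _))
    _ = _ := lintegral_mul_const _ hmeas

end MainAux

section Div

variable {n : ℕ} {δ : ℝ} {lam c : Fin n → ℝ}

lemma sum_le_of_mem {s : Finset (Fin n)} {j : Fin n} (hj : j ∈ s) (g : Fin n → ℝ)
    (hg : ∀ k ∈ s, g k ≤ 0) : ∑ k ∈ s, g k ≤ g j := by
  rw [← Finset.add_sum_erase s g hj]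
  have : ∑ k ∈ s.erase j, g k ≤ 0 :=
    Finset.sum_nonpos fun k hk => hg k (Finset.erase_subset _ _ hk)
  linarith

-- glue copies (to be merged): general measure versions
lemma lint_ofReal_lt_top_of_integrableOn' {α : Type*} [MeasurableSpace α] {μ : Measure α}
    {g : α → ℝ} {s : Set α} (h : IntegrableOn g s μ) :
    ∫⁻ x in s, ENNReal.ofReal (g x) ∂μ < ⊤ :=
  lt_of_le_of_lt (lintegral_ofReal_le_lintegral_enorm g) h.2

lemma div_single (hδ0 : 0 < δ) (hδ1 : δ < 1) (hc : ∀ i, 0 ≤ c i) (hcpos : ∃ j, 0 < c j)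
    (i : Fin n) (hbad : lam i < -1 ∨ (lam i = -1 ∧ c i = 0)) :
    ¬ IntegrableOn
      (fun r : Fin n → ℝ => (∏ k, r k ^ lam k) * ((Real.log (∏ k, r k ^ c k)) ^ 2)⁻¹)
      (Set.univ.pi fun _ : Fin n => Set.Ioo (0 : ℝ) δ) volume := by
  intro hInt
  have hCmeas : MeasurableSet (Set.univ.pi fun _ : Fin n => Set.Ioo (0 : ℝ) δ) :=
    MeasurableSet.univ_pi fun _ => measurableSet_Ioo
  have hFmeas : Measurable ((Set.univ.pi fun _ : Fin n => Set.Ioo (0 : ℝ) δ).indicator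
      (fun r : Fin n → ℝ => ENNReal.ofReal
        ((∏ k, r k ^ lam k) * ((Real.log (∏ k, r k ^ c k)) ^ 2)⁻¹))) :=
    (f_measurable.ennreal_ofReal).indicator hCmeas
  have hlt : ∫⁻ x, (Set.univ.pi fun _ : Fin n => Set.Ioo (0 : ℝ) δ).indicator
      (fun r : Fin n → ℝ => ENNReal.ofReal
        ((∏ k, r k ^ lam k) * ((Real.log (∏ k, r k ^ c k)) ^ 2)⁻¹)) x ∂volume < ⊤ := by
    rw [lintegral_indicator hCmeas]
    exact lint_ofReal_lt_top_of_integrableOn' hInt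
  refine absurd ?_ hlt.ne
  apply pi_lintegral_top hδ0 _ hFmeas {i}
  intro x hx
  simp only [MeasureTheory.lmarginal_singleton]
  have hx' : ∀ k, k ≠ i → x k ∈ Set.Ioo (0:ℝ) δ := by
    intro k hk
    have := hx k (by simp [hk])
    exact ⟨lt_trans (by linarith) this.1, this.2⟩
  rw [slice_eval hδ0 i x hx']
  have hSle : (∑ k ∈ Finset.univ.erase i, c k * Real.log (x k)) ≤ 0 := by
    refine Finset.sum_nonpos fun k hk => ?_
    have hk' := Finset.ne_of_mem_erase hk
    have hlog : Real.log (x k) ≤ 0 :=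
      Real.log_nonpos (hx' k hk').1.le (le_trans (hx' k hk').2.le hδ1.le)
    have := mul_nonneg (hc k) (neg_nonneg.2 hlog)
    linarith
  have hP : 0 < ∏ k ∈ Finset.univ.erase i, x k ^ lam k :=
    Finset.prod_pos fun k hk =>
      Real.rpow_pos_of_pos (hx' k (Finset.ne_of_mem_erase hk)).1 _
  have hSneg : c i = 0 → (∑ k ∈ Finset.univ.erase i, c k * Real.log (x k)) < 0 := by
    intro hci
    obtain ⟨j, hcj⟩ := hcpos
    have hji : j ≠ i := fun h => by rw [h, hci] at hcj; exact lt_irrefl _ hcj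
    have hmem : j ∈ Finset.univ.erase i := Finset.mem_erase.2 ⟨hji, Finset.mem_univ j⟩
    have hterm : c j * Real.log (x j) < 0 :=
      mul_neg_of_pos_of_neg hcj
        (Real.log_neg (hx' j hji).1 (lt_trans (hx' j hji).2 hδ1))
    refine lt_of_le_of_lt (sum_le_of_mem hmem _ fun k hk => ?_) hterm
    have hk' := Finset.ne_of_mem_erase hk
    have hlog : Real.log (x k) ≤ 0 :=
      Real.log_nonpos (hx' k hk').1.le (le_trans (hx' k hk').2.le hδ1.le)
    have := mul_nonneg (hc k) (neg_nonneg.2 hlog)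
    linarith
  have hkey : ∫⁻ t in Set.Ioo (0:ℝ) δ,
      ENNReal.ofReal (t ^ lam i *
        ((c i * Real.log t + ∑ k ∈ Finset.univ.erase i, c k * Real.log (x k))^2)⁻¹) = ⊤ := by
    rcases hbad with hl | ⟨hli, hci⟩
    · have hcs : 0 < c i - (∑ k ∈ Finset.univ.erase i, c k * Real.log (x k)) := by
        rcases (hc i).lt_or_eq with h | h
        · linarith
        · have := hSneg h.symm
          linarith
      exact L3 hδ0 hδ1 hl (hc i) hSle hcs
    · have hS := hSneg hci
      simp only [hci, zero_mul, zero_add, hli]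
      exact L4 hδ0 hδ1 hS
  rw [hkey, ENNReal.top_mul]
  simp only [ne_eq, ENNReal.ofReal_eq_zero, not_le]
  exact hP

end Div

section Div2

variable {n : ℕ} {δ : ℝ} {lam c : Fin n → ℝ}

lemma div_double (hδ0 : 0 < δ) (hδ1 : δ < 1) (hc : ∀ i, 0 ≤ c i)
    (i j : Fin n) (hij : i ≠ j) (hli : lam i = -1) (hlj : lam j = -1)
    (hci : 0 < c i) (hcj : 0 < c j) :
    ¬ IntegrableOn
      (fun r : Fin n → ℝ => (∏ k, r k ^ lam k) * ((Real.log (∏ k, r k ^ c k)) ^ 2)⁻¹)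
      (Set.univ.pi fun _ : Fin n => Set.Ioo (0 : ℝ) δ) volume := by
  intro hInt
  have hCmeas : MeasurableSet (Set.univ.pi fun _ : Fin n => Set.Ioo (0 : ℝ) δ) :=
    MeasurableSet.univ_pi fun _ => measurableSet_Ioo
  have hFmeas : Measurable ((Set.univ.pi fun _ : Fin n => Set.Ioo (0 : ℝ) δ).indicator
      (fun r : Fin n → ℝ => ENNReal.ofReal
        ((∏ k, r k ^ lam k) * ((Real.log (∏ k, r k ^ c k)) ^ 2)⁻¹))) :=
    (f_measurable.ennreal_ofReal).indicator hCmeas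
  have hlt : ∫⁻ x, (Set.univ.pi fun _ : Fin n => Set.Ioo (0 : ℝ) δ).indicator
      (fun r : Fin n → ℝ => ENNReal.ofReal
        ((∏ k, r k ^ lam k) * ((Real.log (∏ k, r k ^ c k)) ^ 2)⁻¹)) x ∂volume < ⊤ := by
    rw [lintegral_indicator hCmeas]
    exact lint_ofReal_lt_top_of_integrableOn' hInt
  refine absurd ?_ hlt.ne
  apply pi_lintegral_top hδ0 _ hFmeas {i, j}
  intro x hx
  have h2 : ({i, j} : Finset (Fin n)) = insert i {j} := rfl
  rw [h2, MeasureTheory.lmarginal_insert _ hFmeas (by simp [hij])]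
  simp only [MeasureTheory.lmarginal_singleton]
  have hx'' : ∀ k, k ≠ i → k ≠ j → x k ∈ Set.Ioo (0:ℝ) δ := by
    intro k hk1 hk2
    have := hx k (by simp [hk1, hk2])
    exact ⟨lt_trans (by linarith) this.1, this.2⟩
  have ha : 0 < -Real.log δ := neg_log_pos hδ0 hδ1
  have hS₂le : (∑ k ∈ (Finset.univ.erase j).erase i, c k * Real.log (x k)) ≤ 0 := by
    refine Finset.sum_nonpos fun k hk => ?_
    have hki := Finset.ne_of_mem_erase hk
    have hkj := Finset.ne_of_mem_erase (Finset.mem_of_mem_erase hk)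
    have hlog : Real.log (x k) ≤ 0 :=
      Real.log_nonpos (hx'' k hki hkj).1.le (le_trans (hx'' k hki hkj).2.le hδ1.le)
    have := mul_nonneg (hc k) (neg_nonneg.2 hlog)
    linarith
  have hP₂ : 0 < ∏ k ∈ (Finset.univ.erase j).erase i, x k ^ lam k :=
    Finset.prod_pos fun k hk =>
      Real.rpow_pos_of_pos
        (hx'' k (Finset.ne_of_mem_erase hk)
          (Finset.ne_of_mem_erase (Finset.mem_of_mem_erase hk))).1 _
  set S₂ : ℝ := ∑ k ∈ (Finset.univ.erase j).erase i, c k * Real.log (x k) with hS₂def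
  set P₂ : ℝ := ∏ k ∈ (Finset.univ.erase j).erase i, x k ^ lam k with hP₂def
  set B : ℝ := c j * (-Real.log δ) - S₂ with hBdef
  have hB0 : 0 < B := by
    have : 0 < c j * (-Real.log δ) := by positivity
    rw [hBdef]; linarith
  rw [eq_top_iff]
  have hmeasout : Measurable fun t : ℝ =>
      ENNReal.ofReal (t ^ (-1:ℝ) * (c i * (-Real.log t) + B)⁻¹) := by
    apply Measurable.ennreal_ofReal
    have h1 : Measurable fun t : ℝ => t ^ (-1:ℝ) := by fun_prop
    exact h1.mul ((measurable_const.mul Real.measurable_log.neg).add_const B).inv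
  calc (⊤:ℝ≥0∞)
      = (∫⁻ t in Set.Ioo (0:ℝ) δ,
          ENNReal.ofReal (t ^ (-1:ℝ) * (c i * (-Real.log t) + B)⁻¹))
        * ENNReal.ofReal ((4 * c j)⁻¹ * P₂) := by
        rw [L6 hδ0 hδ1 hci hB0, ENNReal.top_mul]
        simp only [ne_eq, ENNReal.ofReal_eq_zero, not_le]
        positivity
    _ = ∫⁻ t in Set.Ioo (0:ℝ) δ,
          ENNReal.ofReal (t ^ (-1:ℝ) * (c i * (-Real.log t) + B)⁻¹)
            * ENNReal.ofReal ((4 * c j)⁻¹ * P₂) := (lintegral_mul_const _ hmeasout).symm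
    _ ≤ ∫⁻ t in Set.Ioo (0:ℝ) δ,
          ∫⁻ u, (Set.univ.pi fun _ : Fin n => Set.Ioo (0 : ℝ) δ).indicator
            (fun r : Fin n → ℝ => ENNReal.ofReal
              ((∏ k, r k ^ lam k) * ((Real.log (∏ k, r k ^ c k)) ^ 2)⁻¹))
            (Function.update (Function.update x i t) j u) ∂volume := by
        refine lintegral_mono_ae ((ae_restrict_iff' measurableSet_Ioo).2 (ae_of_all _ ?_))
        intro t ht
        have hlogt : Real.log t < 0 := Real.log_neg ht.1 (lt_trans ht.2 hδ1)
        have hy : ∀ k, k ≠ j → Function.update x i t k ∈ Set.Ioo (0:ℝ) δ := by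
          intro k hk
          rcases eq_or_ne k i with rfl | hk2
          · simpa using ht
          · rw [Function.update_of_ne hk2]
            exact hx'' k hk2 hk
        rw [slice_eval hδ0 j (Function.update x i t) hy]
        -- expand the sum and product over erase j
        have hiej : i ∈ Finset.univ.erase j := Finset.mem_erase.2 ⟨hij, Finset.mem_univ i⟩
        have hsum : ∑ k ∈ Finset.univ.erase j, c k * Real.log (Function.update x i t k)
            = c i * Real.log t + S₂ := by
          calc ∑ k ∈ Finset.univ.erase j, c k * Real.log (Function.update x i t k)
              = ∑ k ∈ Finset.univ.erase j,
                  Function.update (fun k => c k * Real.log (x k)) i (c i * Real.log t) k :=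
                Finset.sum_congr rfl fun k _ =>
                  congrFun (comp_update (fun k s => c k * Real.log s) x i t) k
            _ = c i * Real.log t + S₂ := by
                rw [Finset.sum_update_of_mem hiej, Finset.sdiff_singleton_eq_erase]
        have hprod : ∏ k ∈ Finset.univ.erase j, Function.update x i t k ^ lam k
            = t ^ lam i * P₂ := by
          calc ∏ k ∈ Finset.univ.erase j, Function.update x i t k ^ lam k
              = ∏ k ∈ Finset.univ.erase j,
                  Function.update (fun k => x k ^ lam k) i (t ^ lam i) k :=
                Finset.prod_congr rfl fun k _ =>
                  congrFun (comp_update (fun k s => s ^ lam k) x i t) k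
            _ = t ^ lam i * P₂ := by
                rw [Finset.prod_update_of_mem hiej, Finset.sdiff_singleton_eq_erase]
        rw [hsum, hprod]
        have hL5 := L5 hδ0 hδ1 hcj (show (0:ℝ) ≤ -(c i * Real.log t + S₂) by nlinarith [mul_nonneg (hc i) (neg_nonneg.2 hlogt.le)])
        have hmatch : ∀ u : ℝ, u ^ lam j * ((c j * Real.log u + (c i * Real.log t + S₂))^2)⁻¹
            = u ^ (-1:ℝ) * ((c j * Real.log u - -(c i * Real.log t + S₂))^2)⁻¹ := by
          intro u
          rw [hlj]
          ring_nf
        have heq2 : ENNReal.ofReal (t ^ (-1:ℝ) * (c i * (-Real.log t) + B)⁻¹)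
              * ENNReal.ofReal ((4 * c j)⁻¹ * P₂)
            = ENNReal.ofReal ((4 * c j * (c j * (-Real.log δ) + -(c i * Real.log t + S₂)))⁻¹)
              * ENNReal.ofReal (t ^ lam i * P₂) := by
          rw [hli]
          have hnn1 : (0:ℝ) ≤ c i * -Real.log t := mul_nonneg (hc i) (neg_nonneg.2 hlogt.le)
          rw [← ENNReal.ofReal_mul
              (mul_nonneg (Real.rpow_nonneg ht.1.le _)
                (inv_nonneg.2 (by nlinarith))),
            ← ENNReal.ofReal_mul (inv_nonneg.2 (by nlinarith [mul_nonneg (hc j) ha.le]))]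
          congr 1
          rw [show (4 * c j * (c j * (-Real.log δ) + -(c i * Real.log t + S₂)))⁻¹
              = (4 * c j)⁻¹ * (c i * (-Real.log t) + B)⁻¹ by
            rw [← mul_inv]
            congr 1
            rw [hBdef]
            ring]
          ring
        rw [heq2]
        refine mul_le_mul_left ?_ _
        refine le_trans hL5 (le_of_eq ?_)
        refine setLIntegral_congr_fun measurableSet_Ioo (fun u hu => ?_)
        rw [hmatch u]
    _ ≤ _ := by
        refine setLIntegral_le_lintegral _ _

end Div2

section Conv

variable {n : ℕ} {δ : ℝ} {lam c : Fin n → ℝ}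

lemma conv_of_bound (hδ0 : 0 < δ) {W : ℝ} (hW : 0 ≤ W) (b : Fin n → ℝ → ℝ)
    (hbm : ∀ k, Measurable (b k))
    (hfin : ∀ k, ∫⁻ t in Set.Ioo (0:ℝ) δ, ENNReal.ofReal (b k t) < ⊤)
    (hbnn : ∀ k t, t ∈ Set.Ioo (0:ℝ) δ → 0 ≤ b k t)
    (hbd : ∀ r : Fin n → ℝ, r ∈ (Set.univ.pi fun _ : Fin n => Set.Ioo (0 : ℝ) δ) →
      (∏ k, r k ^ lam k) * ((Real.log (∏ k, r k ^ c k)) ^ 2)⁻¹ ≤ W * ∏ k, b k (r k)) :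
    IntegrableOn
      (fun r : Fin n → ℝ => (∏ k, r k ^ lam k) * ((Real.log (∏ k, r k ^ c k)) ^ 2)⁻¹)
      (Set.univ.pi fun _ : Fin n => Set.Ioo (0 : ℝ) δ) volume := by
  have hCmeas : MeasurableSet (Set.univ.pi fun _ : Fin n => Set.Ioo (0 : ℝ) δ) :=
    MeasurableSet.univ_pi fun _ => measurableSet_Ioo
  refine ⟨f_measurable.aestronglyMeasurable, ?_⟩
  have hnn : ∀ r ∈ (Set.univ.pi fun _ : Fin n => Set.Ioo (0 : ℝ) δ),
      0 ≤ (∏ k, r k ^ lam k) * ((Real.log (∏ k, r k ^ c k)) ^ 2)⁻¹ := by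
    intro r hr
    exact mul_nonneg (Finset.prod_nonneg fun k _ =>
      Real.rpow_nonneg (hr k (Set.mem_univ k)).1.le _) (inv_nonneg.2 (sq_nonneg _))
  rw [hasFiniteIntegral_iff_ofReal ((ae_restrict_iff' hCmeas).2 (ae_of_all _ hnn))]
  set G : Fin n → ℝ → ℝ≥0∞ := fun k t =>
    (Set.Ioo (0:ℝ) δ).indicator (fun t => ENNReal.ofReal (b k t)) t with hGdef
  have hGmeas : ∀ k, Measurable (G k) := fun k =>
    ((hbm k).ennreal_ofReal).indicator measurableSet_Ioo
  have hGfin : ∀ k, ∫⁻ t, G k t < ⊤ := by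
    intro k
    show ∫⁻ t, (Set.Ioo (0:ℝ) δ).indicator (fun t => ENNReal.ofReal (b k t)) t < ⊤
    rw [lintegral_indicator measurableSet_Ioo]
    exact hfin k
  have hprodmeas : Measurable fun r : Fin n → ℝ => ∏ k, G k (r k) :=
    Finset.measurable_prod _ fun k _ => (hGmeas k).comp (measurable_pi_apply k)
  calc ∫⁻ r in (Set.univ.pi fun _ : Fin n => Set.Ioo (0 : ℝ) δ),
        ENNReal.ofReal ((∏ k, r k ^ lam k) * ((Real.log (∏ k, r k ^ c k)) ^ 2)⁻¹) ∂volume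
      ≤ ∫⁻ r in (Set.univ.pi fun _ : Fin n => Set.Ioo (0 : ℝ) δ),
          ENNReal.ofReal W * ∏ k, G k (r k) ∂volume := by
        refine lintegral_mono_ae ((ae_restrict_iff' hCmeas).2 (ae_of_all _ ?_))
        intro r hr
        have h1 : ENNReal.ofReal ((∏ k, r k ^ lam k) * ((Real.log (∏ k, r k ^ c k)) ^ 2)⁻¹)
            ≤ ENNReal.ofReal (W * ∏ k, b k (r k)) := ENNReal.ofReal_le_ofReal (hbd r hr)
        refine le_trans h1 (le_of_eq ?_)
        rw [ENNReal.ofReal_mul hW,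
          ENNReal.ofReal_prod_of_nonneg (fun k _ => hbnn k (r k) (hr k (Set.mem_univ k)))]
        congr 1
        refine Finset.prod_congr rfl fun k _ => ?_
        exact (Set.indicator_of_mem (hr k (Set.mem_univ k))
          fun t => ENNReal.ofReal (b k t)).symm
    _ ≤ ∫⁻ r : Fin n → ℝ, ENNReal.ofReal W * ∏ k, G k (r k) ∂volume :=
        setLIntegral_le_lintegral _ _
    _ = ENNReal.ofReal W * ∏ k, ∫⁻ t, G k t := by
        rw [lintegral_const_mul (ENNReal.ofReal W) hprodmeas]
        congr 1
        rw [MeasureTheory.volume_pi, MeasureTheory.lintegral_eq_lmarginal_univ (fun _ => 0)]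
        exact my_lmarginal_prod G hGmeas Finset.univ _
    _ < ⊤ := by
        refine ENNReal.mul_lt_top ENNReal.ofReal_lt_top ?_
        exact ENNReal.prod_lt_top fun k _ => hGfin k

lemma conv (hδ0 : 0 < δ) (hδ1 : δ < 1) (hc : ∀ i, 0 ≤ c i) (hcpos : ∃ j, 0 < c j)
    (h1 : ∀ i, -1 ≤ lam i) (h2 : ∀ i, lam i = -1 → 0 < c i)
    (h3 : ∀ i j, lam i = -1 → lam j = -1 → i = j) :
    IntegrableOn
      (fun r : Fin n → ℝ => (∏ k, r k ^ lam k) * ((Real.log (∏ k, r k ^ c k)) ^ 2)⁻¹)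
      (Set.univ.pi fun _ : Fin n => Set.Ioo (0 : ℝ) δ) volume := by
  classical
  have hterm_le : ∀ (r : Fin n → ℝ), (∀ k, r k ∈ Set.Ioo (0:ℝ) δ) → ∀ k,
      c k * Real.log (r k) ≤ 0 := by
    intro r hr k
    have hlog : Real.log (r k) ≤ 0 :=
      Real.log_nonpos (hr k).1.le (le_trans (hr k).2.le hδ1.le)
    have := mul_nonneg (hc k) (neg_nonneg.2 hlog)
    linarith
  by_cases hex : ∃ i₀, lam i₀ = -1
  · obtain ⟨i₀, hi₀⟩ := hex
    have hci₀ : 0 < c i₀ := h2 i₀ hi₀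
    set b : Fin n → ℝ → ℝ := Function.update (fun k => fun t : ℝ => t ^ lam k) i₀
      (fun t => t ^ (-1:ℝ) * ((c i₀ * Real.log t)^2)⁻¹) with hbdef
    refine conv_of_bound hδ0 (W := 1) zero_le_one b ?_ ?_ ?_ ?_
    · intro k
      rcases eq_or_ne k i₀ with rfl | hk
      · rw [hbdef, Function.update_self]
        have hm1 : Measurable fun t : ℝ => t ^ (-1:ℝ) := by fun_prop
        exact hm1.mul (((measurable_const.mul Real.measurable_log).pow_const 2).inv)
      · rw [hbdef, Function.update_of_ne hk]
        fun_prop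
    · intro k
      rcases eq_or_ne k i₀ with rfl | hk
      · rw [hbdef, Function.update_self]
        have hL2 := L2 hδ0 hδ1 hci₀ (le_refl (0:ℝ))
        simp only [add_zero] at hL2
        exact hL2
      · rw [hbdef, Function.update_of_ne hk]
        refine L1 hδ0 (lt_of_le_of_ne (h1 k) (fun h => hk (h3 k i₀ h.symm hi₀)))
    · intro k t ht
      rcases eq_or_ne k i₀ with rfl | hk
      · rw [hbdef, Function.update_self]
        exact mul_nonneg (Real.rpow_nonneg ht.1.le _) (inv_nonneg.2 (sq_nonneg _))
      · rw [hbdef, Function.update_of_ne hk]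
        exact Real.rpow_nonneg ht.1.le _
    · intro r hr
      have hr' : ∀ k, r k ∈ Set.Ioo (0:ℝ) δ := fun k => hr k (Set.mem_univ k)
      rw [one_mul]
      have hprod : ∏ k, b k (r k)
          = (r i₀ ^ (-1:ℝ) * ((c i₀ * Real.log (r i₀))^2)⁻¹)
            * ∏ k ∈ Finset.univ.erase i₀, r k ^ lam k := by
        rw [hbdef]
        exact prod_update_fn (fun k => fun t : ℝ => t ^ lam k) i₀ _ r
      rw [hprod]
      have hsplit : ∏ k, r k ^ lam k
          = r i₀ ^ lam i₀ * ∏ k ∈ Finset.univ.erase i₀, r k ^ lam k :=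
        (Finset.mul_prod_erase Finset.univ _ (Finset.mem_univ i₀)).symm
      rw [hsplit, log_prod_rpow (fun k => (hr' k).1) c, hi₀]
      have hlogneg : Real.log (r i₀) < 0 := Real.log_neg (hr' i₀).1 (lt_trans (hr' i₀).2 hδ1)
      have htermneg : c i₀ * Real.log (r i₀) < 0 := mul_neg_of_pos_of_neg hci₀ hlogneg
      have hsum_le : (∑ k, c k * Real.log (r k)) ≤ c i₀ * Real.log (r i₀) :=
        sum_le_of_mem (Finset.mem_univ i₀) _ (fun k _ => hterm_le r hr' k)
      have hw : ((∑ k, c k * Real.log (r k))^2)⁻¹ ≤ ((c i₀ * Real.log (r i₀))^2)⁻¹ := by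
        apply inv_anti₀ (by nlinarith [htermneg])
        nlinarith
      have hPe : (0:ℝ) ≤ ∏ k ∈ Finset.univ.erase i₀, r k ^ lam k :=
        Finset.prod_nonneg fun k _ => Real.rpow_nonneg
          (hr' k).1.le _
      have hr0 : (0:ℝ) ≤ r i₀ ^ (-1:ℝ) := Real.rpow_nonneg (hr' i₀).1.le _
      calc r i₀ ^ (-1:ℝ) * (∏ k ∈ Finset.univ.erase i₀, r k ^ lam k)
            * ((∑ k, c k * Real.log (r k))^2)⁻¹
          ≤ r i₀ ^ (-1:ℝ) * (∏ k ∈ Finset.univ.erase i₀, r k ^ lam k)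
            * ((c i₀ * Real.log (r i₀))^2)⁻¹ := by
            refine mul_le_mul_of_nonneg_left hw (by positivity)
        _ = r i₀ ^ (-1:ℝ) * ((c i₀ * Real.log (r i₀))^2)⁻¹
            * ∏ k ∈ Finset.univ.erase i₀, r k ^ lam k := by ring
  · push_neg at hex
    obtain ⟨j₀, hcj₀⟩ := hcpos
    have hW0 : (0:ℝ) < ((c j₀ * Real.log δ)^2)⁻¹ := by
      have hlogδ : Real.log δ < 0 := Real.log_neg hδ0 hδ1
      have h1 : c j₀ * Real.log δ < 0 := mul_neg_of_pos_of_neg hcj₀ hlogδ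
      have h2 : (0:ℝ) < (c j₀ * Real.log δ)^2 := by nlinarith
      exact inv_pos.2 h2
    refine conv_of_bound hδ0 hW0.le (fun k => fun t : ℝ => t ^ lam k)
      (fun k => by fun_prop)
      (fun k => L1 hδ0 (lt_of_le_of_ne (h1 k) (Ne.symm (hex k))))
      (fun k t ht => Real.rpow_nonneg ht.1.le _) ?_
    intro r hr
    have hr' : ∀ k, r k ∈ Set.Ioo (0:ℝ) δ := fun k => hr k (Set.mem_univ k)
    rw [log_prod_rpow (fun k => (hr' k).1) c]
    have hlogδ : Real.log δ < 0 := Real.log_neg hδ0 hδ1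
    have htermδ : c j₀ * Real.log δ < 0 := mul_neg_of_pos_of_neg hcj₀ hlogδ
    have hsum_le : (∑ k, c k * Real.log (r k)) ≤ c j₀ * Real.log δ := by
      refine le_trans (sum_le_of_mem (Finset.mem_univ j₀) _ (fun k _ => hterm_le r hr' k)) ?_
      exact mul_le_mul_of_nonneg_left
        (Real.log_le_log (hr' j₀).1 (hr' j₀).2.le) (hc j₀)
    have hw : ((∑ k, c k * Real.log (r k))^2)⁻¹ ≤ ((c j₀ * Real.log δ)^2)⁻¹ := by
      apply inv_anti₀ (by nlinarith [htermδ])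
      nlinarith
    have hPnn : (0:ℝ) ≤ ∏ k, r k ^ lam k :=
      Finset.prod_nonneg fun k _ => Real.rpow_nonneg (hr' k).1.le _
    calc (∏ k, r k ^ lam k) * ((∑ k, c k * Real.log (r k))^2)⁻¹
        ≤ (∏ k, r k ^ lam k) * ((c j₀ * Real.log δ)^2)⁻¹ :=
          mul_le_mul_of_nonneg_left hw hPnn
      _ = ((c j₀ * Real.log δ)^2)⁻¹ * ∏ k, r k ^ lam k := by ring

end Conv

/-- The real integrability criterion underlying the proof of Proposition 5.3 of
the paper: for `δ ∈ (0,1)`, `λᵢ ∈ ℝ` and `cᵢ ≥ 0` with some `c_j > 0`, the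
integral `∫_{(0,δ)ⁿ} (∏ rᵢ^{λᵢ}) (log ∏ rᵢ^{cᵢ})^{-2} dr` is finite iff
(a) every `λᵢ ≥ -1`, (b) `λᵢ = -1` forces `cᵢ > 0`, and (c) at most one
index has `λᵢ = -1`. -/
theorem log_weighted_monomial_integrability_criterion
    (n : ℕ) (hn : 1 ≤ n) (δ : ℝ) (hδ0 : 0 < δ) (hδ1 : δ < 1)
    (lam c : Fin n → ℝ) (hc : ∀ i, 0 ≤ c i) (hcpos : ∃ j, 0 < c j) :
    IntegrableOn
      (fun r : Fin n → ℝ =>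
        (∏ i, r i ^ lam i) * ((Real.log (∏ i, r i ^ c i)) ^ 2)⁻¹)
      (Set.univ.pi fun _ : Fin n => Set.Ioo (0 : ℝ) δ) volume
    ↔ ((∀ i, -1 ≤ lam i) ∧ (∀ i, lam i = -1 → 0 < c i) ∧
        ∀ i j, lam i = -1 → lam j = -1 → i = j) := by
  constructor
  · intro hInt
    refine ⟨fun i => ?_, fun i hi => ?_, fun i j hi hj => ?_⟩
    · by_contra h
      push_neg at h
      exact div_single hδ0 hδ1 hc hcpos i (Or.inl h) hInt
    · by_contra h
      push_neg at h
      exact div_single hδ0 hδ1 hc hcpos i (Or.inr ⟨hi, le_antisymm h (hc i)⟩) hInt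
    · by_contra hij
      by_cases hci : 0 < c i
      · by_cases hcj : 0 < c j
        · exact div_double hδ0 hδ1 hc i j hij hi hj hci hcj hInt
        · push_neg at hcj
          exact div_single hδ0 hδ1 hc hcpos j
            (Or.inr ⟨hj, le_antisymm hcj (hc j)⟩) hInt
      · push_neg at hci
        exact div_single hδ0 hδ1 hc hcpos i
          (Or.inr ⟨hi, le_antisymm hci (hc i)⟩) hInt
  · rintro ⟨h1, h2, h3⟩
    exact conv hδ0 hδ1 hc hcpos h1 h2 h3
end
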